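/- arXiv:2301.09079 — 5 statements merged into one kernel-verified Lean document; each statement's English description precedes it below -/
import Mathlib

section
/- Let d, N ≥ 1, let ε ∈ (0,1), and let X_1,…,X_N be random points in [0,1]^d on a common probability space. Suppose p ∈ (0,1) satisfies (1+p)^d ≤ 2 − ε, and suppose that for every nonempty u ⊆ {1,…,d} one has P( D*_N(X_1(u),…,X_N(u)) > B(|u|,ε,N) ) ≤ p^{|u|}. Then with probability at least ε, simultaneously for every nonempty u ⊆ {1,…,d}, D*_N(X_1(u),…,X_N(u)) ≤ B(|u|,ε,N); in particular, for any nonnegative weights (γ_{u,d})_{∅≠u⊆{1,…,d}}, the weighted star discrepancy max_{∅≠u⊆{1,…,d}} γ_{u,d}·D*_N(X_1(u),…,X_N(u)) is at most max_{∅≠u⊆{1,…,d}} γ_{u,d}·B(|u|,ε,N) with probability at least ε. -/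
open MeasureTheory ProbabilityTheory Real Set
open scoped ENNReal

noncomputable def starDisc {d : ℕ} {ι : Type*} [Fintype ι] (p : ι → (Fin d → ℝ)) : ℝ :=
  ⨆ x : (Set.Icc (0 : Fin d → ℝ) 1),
    |(volume (Set.Icc (0 : Fin d → ℝ) x.1)).toReal -
      (∑ n, (Set.Icc (0 : Fin d → ℝ) x.1).indicator (fun _ => (1:ℝ)) (p n)) / (Fintype.card ι : ℝ)|

noncomputable def cConst (d : ℕ) (q : ℝ) : ℝ :=
  Real.log ((2 * Real.exp 1) ^ d / (Real.sqrt (2 * Real.pi * d) * (1 - q)))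

noncomputable def BBound (d N : ℕ) (q : ℝ) : ℝ :=
  6 * (d : ℝ) ^ ((3:ℝ)/4) / (N : ℝ) ^ ((1:ℝ)/2 + 1/(2*(d:ℝ))) *
    Real.sqrt ((d : ℝ) * Real.log ((N : ℝ) + 1) + cConst d q) + 2 * cConst d q / (3 * (N:ℝ))

/-- Projection of a point of `[0,1]^d` to the coordinates indexed by a subset `u`. -/
noncomputable def projPt {d : ℕ} (u : Finset (Fin d)) (p : Fin d → ℝ) : Fin u.card → ℝ :=
  fun j => p ((u.orderIsoOfFin rfl j : {x // x ∈ u}) : Fin d)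

theorem weighted_star_discrepancy_bound {d N : ℕ} (hd : 1 ≤ d) (hN : 1 ≤ N)
    {Ω : Type*} [MeasureSpace Ω] [IsProbabilityMeasure (ℙ : Measure Ω)]
    (X : Fin N → Ω → (Fin d → ℝ))
    (ε p : ℝ) (hε : ε ∈ Set.Ioo (0:ℝ) 1) (hp : p ∈ Set.Ioo (0:ℝ) 1)
    (hpd : (1 + p) ^ d ≤ 2 - ε)
    (hproj : ∀ u : Finset (Fin d), u.Nonempty →
      ℙ {ω | BBound u.card N ε < starDisc (fun n => projPt u (X n ω))}
        ≤ ENNReal.ofReal (p ^ u.card))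
    (γ : Finset (Fin d) → ℝ) (hγ : ∀ u, 0 ≤ γ u) :
    ENNReal.ofReal ε ≤ ℙ {ω | ∀ u : Finset (Fin d), u.Nonempty →
        starDisc (fun n => projPt u (X n ω)) ≤ BBound u.card N ε} ∧
    ENNReal.ofReal ε ≤ ℙ {ω |
        (⨆ u : {u : Finset (Fin d) // u.Nonempty},
          γ u.1 * starDisc (fun n => projPt u.1 (X n ω)))
        ≤ ⨆ u : {u : Finset (Fin d) // u.Nonempty}, γ u.1 * BBound u.1.card N ε} := by

  obtain ⟨hε0, hε1⟩ := hε
  obtain ⟨hp0, hp1⟩ := hp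
  set G : Set Ω := {ω | ∀ u : Finset (Fin d), u.Nonempty →
      starDisc (fun n => projPt u (X n ω)) ≤ BBound u.card N ε} with hGdef
  -- sum identity
  have hsum : ∑ u : Finset (Fin d), p ^ u.card = (1 + p) ^ d := by
    have := Finset.prod_add (fun _ : Fin d => p) (fun _ : Fin d => (1:ℝ)) Finset.univ
    simp only [Finset.prod_const, Finset.prod_const_one, mul_one] at this
    rw [← Finset.powerset_univ]
    simpa [Finset.prod_const, Finset.card_univ, add_comm p 1] using this.symm
  have hBadle : ℙ Gᶜ ≤ ENNReal.ofReal (1 - ε) := by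
    have hsub : Gᶜ ⊆ ⋃ u : Finset (Fin d), ⋃ (_ : u.Nonempty),
        {ω | BBound u.card N ε < starDisc (fun n => projPt u (X n ω))} := by
      intro ω hω
      simp only [hGdef, mem_compl_iff, mem_setOf_eq, not_forall] at hω
      obtain ⟨u, hu, hlt⟩ := hω
      exact mem_iUnion.2 ⟨u, mem_iUnion.2 ⟨hu, not_le.mp hlt⟩⟩
    refine (measure_mono hsub).trans ?_
    refine (measure_iUnion_le _).trans ?_
    rw [tsum_fintype]
    have hterm : ∀ u : Finset (Fin d),
        ℙ (⋃ (_ : u.Nonempty),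
            {ω | BBound u.card N ε < starDisc (fun n => projPt u (X n ω))})
          ≤ ENNReal.ofReal (if u = ∅ then 0 else p ^ u.card) := by
      intro u
      by_cases hu : u.Nonempty
      · have : (⋃ (_ : u.Nonempty),
            {ω | BBound u.card N ε < starDisc fun n => projPt u (X n ω)})
            = {ω | BBound u.card N ε < starDisc fun n => projPt u (X n ω)} := by
          ext ω; simp [hu]
        rw [this, if_neg (Finset.nonempty_iff_ne_empty.mp hu)]
        exact hproj u hu
      · rw [Finset.not_nonempty_iff_eq_empty] at hu
        simp [hu]
    refine (Finset.sum_le_sum fun u _ => hterm u).trans ?_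
    rw [← ENNReal.ofReal_sum_of_nonneg (fun u _ => by positivity)]
    refine ENNReal.ofReal_le_ofReal ?_
    have hkey : ∑ u : Finset (Fin d), (if u = ∅ then (0:ℝ) else p ^ u.card)
        = (1 + p) ^ d - 1 := by
      have : ∀ u : Finset (Fin d), (if u = ∅ then (0:ℝ) else p ^ u.card)
          = p ^ u.card - (if u = ∅ then (1:ℝ) else 0) := by
        intro u; by_cases hu : u = ∅ <;> simp [hu]
      rw [Finset.sum_congr rfl fun u _ => this u, Finset.sum_sub_distrib, hsum]
      simp
    rw [hkey]; linarith
  have hunion : (1 : ℝ≥0∞) ≤ ℙ G + ℙ Gᶜ := by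
    have h1 : (1 : ℝ≥0∞) = ℙ (G ∪ Gᶜ) := by
      rw [Set.union_compl_self, measure_univ]
    rw [h1]; exact measure_union_le _ _
  have hmain : ENNReal.ofReal ε ≤ ℙ G := by
    have h2 : ENNReal.ofReal ε + ENNReal.ofReal (1 - ε) = 1 := by
      rw [← ENNReal.ofReal_add hε0.le (by linarith)]
      norm_num
    have h3 : ENNReal.ofReal ε + ENNReal.ofReal (1 - ε)
        ≤ ℙ G + ENNReal.ofReal (1 - ε) := by
      rw [h2]
      exact hunion.trans (add_le_add_right hBadle _)
    exact (ENNReal.add_le_add_iff_right ENNReal.ofReal_ne_top).mp h3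
  refine ⟨hmain, hmain.trans (measure_mono ?_)⟩
  intro ω hω
  simp only [hGdef, mem_setOf_eq] at hω ⊢
  haveI : Nonempty (Fin d) := ⟨⟨0, hd⟩⟩
  haveI : Nonempty {u : Finset (Fin d) // u.Nonempty} :=
    ⟨⟨Finset.univ, Finset.univ_nonempty⟩⟩
  refine ciSup_le fun u => ?_
  refine le_trans (mul_le_mul_of_nonneg_left (hω u.1 u.2) (hγ u.1)) ?_
  exact le_ciSup (f := fun u : {u : Finset (Fin d) // u.Nonempty} =>
    γ u.1 * BBound u.1.card N ε) (Set.Finite.bddAbove (Set.finite_range _)) u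
end

section
/- Let x_1,…,x_N ∈ [0,1]^d and define the kernel K(x,y) = ∏_{i=1}^d (1 − max(x_i, y_i)) for x, y ∈ [0,1]^d. Let γ ∈ (0,1] and let f, g : [0,1]^d → ℝ be measurable functions with g ∈ L²([0,1]^d), such that f(x)² = ∫_{[0,1]^d} K(x,y) g(y)² dy for every x ∈ [0,1]^d and γ·‖g‖²_{L²} ≤ ‖f‖²_{L²}. Then (1 − D*_N(x_1,…,x_N)/γ)·‖f‖²_{L²} ≤ (1/N)·∑_{j=1}^N f(x_j)² ≤ (1 + D*_N(x_1,…,x_N)/γ)·‖f‖²_{L²}. -/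
open MeasureTheory Real Set
open scoped ENNReal

/-- The kernel `K(x,y) = ∏_i (1 - max(x_i, y_i))`. -/
noncomputable def kerK {d : ℕ} (x y : Fin d → ℝ) : ℝ := ∏ i, (1 - max (x i) (y i))

namespace SamplingAux

variable {d : ℕ}

/-- indicator of the strict upper box `{t | a < t}` as an `ℝ≥0∞`-valued function. -/
noncomputable def φ (a t : Fin d → ℝ) : ℝ≥0∞ := if ∀ i, a i < t i then 1 else 0

lemma φ_meas : Measurable (fun p : (Fin d → ℝ) × (Fin d → ℝ) => φ p.1 p.2) := by
  have hs : MeasurableSet {p : (Fin d → ℝ) × (Fin d → ℝ) | ∀ i, p.1 i < p.2 i} := by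
    rw [show {p : (Fin d → ℝ) × (Fin d → ℝ) | ∀ i, p.1 i < p.2 i}
        = ⋂ i, {p : (Fin d → ℝ) × (Fin d → ℝ) | p.1 i < p.2 i} by ext p; simp]
    exact MeasurableSet.iInter fun i => measurableSet_lt (by fun_prop) (by fun_prop)
  unfold φ
  exact Measurable.ite hs measurable_const measurable_const

lemma φ_meas_left (t : Fin d → ℝ) : Measurable (fun a => φ a t) :=
  φ_meas.comp (measurable_id.prodMk measurable_const)

lemma φ_meas_right (a : Fin d → ℝ) : Measurable (fun t => φ a t) :=
  φ_meas.comp (measurable_const.prodMk measurable_id)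

lemma φ_le_one (a t : Fin d → ℝ) : φ a t ≤ 1 := by
  unfold φ; split <;> simp

lemma φ_ne_top (a t : Fin d → ℝ) : φ a t ≠ ⊤ :=
  ne_top_of_le_ne_top ENNReal.one_ne_top (φ_le_one a t)

lemma strictSet_meas (a : Fin d → ℝ) : MeasurableSet {t : Fin d → ℝ | ∀ i, a i < t i} := by
  rw [show {t : Fin d → ℝ | ∀ i, a i < t i} = ⋂ i, {t : Fin d → ℝ | a i < t i} by ext t; simp]
  exact MeasurableSet.iInter fun i => measurableSet_lt measurable_const (measurable_pi_apply i)

lemma lowSet_meas (t : Fin d → ℝ) : MeasurableSet {a : Fin d → ℝ | ∀ i, a i < t i} := by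
  rw [show {a : Fin d → ℝ | ∀ i, a i < t i} = ⋂ i, {a : Fin d → ℝ | a i < t i} by ext a; simp]
  exact MeasurableSet.iInter fun i => measurableSet_lt (measurable_pi_apply i) measurable_const

/-- measure of the strict upper box inside the unit cube -/
lemma meas_upper (m : Fin d → ℝ) (hm0 : (0:Fin d → ℝ) ≤ m) (hm1 : m ≤ 1) :
    (volume.restrict (Icc (0:Fin d → ℝ) 1)) {t | ∀ i, m i < t i}
      = ENNReal.ofReal (∏ i, (1 - m i)) := by
  rw [Measure.restrict_apply (strictSet_meas m)]
  have hset : {t : Fin d → ℝ | ∀ i, m i < t i} ∩ Icc 0 1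
      = univ.pi fun i => Ioc (m i) 1 := by
    ext t
    simp only [mem_inter_iff, mem_setOf_eq, mem_Icc, Pi.le_def, mem_pi, mem_univ,
      forall_true_left, mem_Ioc, Pi.zero_apply, Pi.one_apply]
    constructor
    · rintro ⟨h1, _, h3⟩ i; exact ⟨h1 i, h3 i⟩
    · intro h; exact ⟨fun i => (h i).1, fun i => le_of_lt (lt_of_le_of_lt (hm0 i) (h i).1),
        fun i => (h i).2⟩
  rw [hset, volume_pi_pi]
  calc ∏ i, volume (Ioc (m i) 1) = ∏ i, ENNReal.ofReal (1 - m i) :=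
        Finset.prod_congr rfl fun i _ => Real.volume_Ioc
    _ = ENNReal.ofReal (∏ i, (1 - m i)) :=
        (ENNReal.ofReal_prod_of_nonneg (fun i _ => sub_nonneg.2 (hm1 i))).symm

/-- measure of the strict lower box inside the unit cube -/
lemma meas_lower (t : Fin d → ℝ) (ht : t ∈ Icc (0:Fin d → ℝ) 1) :
    (volume.restrict (Icc (0:Fin d → ℝ) 1)) {a | ∀ i, a i < t i}
      = volume (Icc (0:Fin d → ℝ) t) := by
  rw [Measure.restrict_apply (lowSet_meas t)]
  have hset : {a : Fin d → ℝ | ∀ i, a i < t i} ∩ Icc 0 1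
      = univ.pi fun i => Ico 0 (t i) := by
    ext a
    simp only [mem_inter_iff, mem_setOf_eq, mem_Icc, Pi.le_def, mem_pi, mem_univ,
      forall_true_left, mem_Ico, Pi.zero_apply, Pi.one_apply]
    constructor
    · rintro ⟨h1, h2, _⟩ i; exact ⟨h2 i, h1 i⟩
    · intro h; exact ⟨fun i => (h i).2, fun i => (h i).1,
        fun i => le_trans (le_of_lt (h i).2) (ht.2 i)⟩
  rw [hset, volume_pi_pi, volume_Icc_pi]
  exact Finset.prod_congr rfl fun i _ => by simp [Real.volume_Ico]

lemma cube_vol : volume (Icc (0:Fin d → ℝ) 1) = 1 := by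
  rw [volume_Icc_pi]; simp

lemma kerK_nonneg {z y : Fin d → ℝ} (hz : z ∈ Icc (0:Fin d → ℝ) 1)
    (hy : y ∈ Icc (0:Fin d → ℝ) 1) : 0 ≤ kerK z y :=
  Finset.prod_nonneg fun i _ => sub_nonneg.2 (max_le (hz.2 i) (hy.2 i))

lemma kerK_le_one {z y : Fin d → ℝ} (hz : z ∈ Icc (0:Fin d → ℝ) 1)
    (hy : y ∈ Icc (0:Fin d → ℝ) 1) : kerK z y ≤ 1 :=
  Finset.prod_le_one (fun i _ => sub_nonneg.2 (max_le (hz.2 i) (hy.2 i)))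
    (fun i _ => by have := le_max_left (z i) (y i); have := hz.1 i; simp only [Pi.zero_apply] at *; linarith)

/-- the kernel as a `lintegral` of products of indicators -/
lemma ker_eq {z y : Fin d → ℝ} (hz : z ∈ Icc (0:Fin d → ℝ) 1)
    (hy : y ∈ Icc (0:Fin d → ℝ) 1) :
    ENNReal.ofReal (kerK z y) = ∫⁻ t in Icc (0:Fin d → ℝ) 1, φ z t * φ y t := by
  have hfun : ∀ t, φ z t * φ y t
      = ({t : Fin d → ℝ | ∀ i, max (z i) (y i) < t i}).indicator (1 : (Fin d → ℝ) → ℝ≥0∞) t := by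
    intro t
    have hiff : (∀ i, max (z i) (y i) < t i) ↔ (∀ i, z i < t i) ∧ (∀ i, y i < t i) := by
      simp [max_lt_iff, forall_and]
    simp only [φ, Set.indicator_apply, mem_setOf_eq, hiff, Pi.one_apply]
    by_cases h1 : ∀ i, z i < t i <;> by_cases h2 : ∀ i, y i < t i <;> simp [h1, h2]
  simp only [hfun]
  rw [lintegral_indicator_one (strictSet_meas _)]
  rw [meas_upper _ (fun i => le_max_of_le_left (hz.1 i))
    (fun i => max_le (hz.2 i) (hy.2 i))]
  rfl

end SamplingAux

namespace SamplingAux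

variable {d : ℕ}

noncomputable def Hfun (g : (Fin d → ℝ) → ℝ) (t : Fin d → ℝ) : ℝ≥0∞ :=
  ∫⁻ y in Icc (0:Fin d → ℝ) 1, φ y t * ENNReal.ofReal (g y ^ 2)

lemma Hfun_meas (g : (Fin d → ℝ) → ℝ) (hg : Measurable g) : Measurable (Hfun g) := by
  apply Measurable.lintegral_prod_right (f := fun t y => φ y t * ENNReal.ofReal (g y ^ 2))
  exact (φ_meas.comp measurable_swap).mul
    ((ENNReal.measurable_ofReal.comp ((hg.comp measurable_snd).pow_const 2)))

lemma Hfun_le (g : (Fin d → ℝ) → ℝ) (t : Fin d → ℝ) :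
    Hfun g t ≤ ∫⁻ y in Icc (0:Fin d → ℝ) 1, ENNReal.ofReal (g y ^ 2) :=
  lintegral_mono fun y => mul_le_of_le_one_left zero_le (φ_le_one y t)

lemma vol_meas : Measurable (fun t : Fin d → ℝ => volume (Icc (0:Fin d → ℝ) t)) := by
  simp only [volume_Icc_pi]
  exact Finset.measurable_prod _ fun i _ => by fun_prop

lemma vol_ne_top (t : Fin d → ℝ) : volume (Icc (0:Fin d → ℝ) t) ≠ ⊤ := by
  rw [volume_Icc_pi]
  exact ENNReal.prod_ne_top fun i _ => ENNReal.ofReal_ne_top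

lemma kerK_meas (z : Fin d → ℝ) : Measurable (fun y => kerK z y) := by
  unfold kerK; exact Finset.measurable_prod _ fun i _ => by fun_prop

lemma hCg_eq {g : (Fin d → ℝ) → ℝ}
    (hgL2 : Integrable (fun y => g y ^ 2) (volume.restrict (Icc (0 : Fin d → ℝ) 1))) :
    ENNReal.ofReal (∫ y in Icc (0:Fin d → ℝ) 1, g y ^ 2)
      = ∫⁻ y in Icc (0:Fin d → ℝ) 1, ENNReal.ofReal (g y ^ 2) :=
  ofReal_integral_eq_lintegral_ofReal hgL2 (Filter.Eventually.of_forall fun y => sq_nonneg _)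

lemma Hfun_ne_top {g : (Fin d → ℝ) → ℝ}
    (hgL2 : Integrable (fun y => g y ^ 2) (volume.restrict (Icc (0 : Fin d → ℝ) 1)))
    (t : Fin d → ℝ) : Hfun g t ≠ ⊤ :=
  ne_top_of_le_ne_top (by rw [← hCg_eq hgL2]; exact ENNReal.ofReal_ne_top) (Hfun_le g t)

lemma kerK_int {g : (Fin d → ℝ) → ℝ} (hg : Measurable g)
    (hgL2 : Integrable (fun y => g y ^ 2) (volume.restrict (Icc (0 : Fin d → ℝ) 1)))
    (z : Fin d → ℝ) (hz : z ∈ Icc (0:Fin d → ℝ) 1) :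
    Integrable (fun y => kerK z y * g y ^ 2) (volume.restrict (Icc (0 : Fin d → ℝ) 1)) := by
  refine hgL2.mono' (((kerK_meas z).mul (hg.pow_const 2)).aestronglyMeasurable) ?_
  filter_upwards [ae_restrict_mem measurableSet_Icc] with y hy
  rw [Real.norm_eq_abs, abs_mul, abs_of_nonneg (kerK_nonneg hz hy), abs_of_nonneg (sq_nonneg (g y))]
  exact mul_le_of_le_one_left (sq_nonneg _) (kerK_le_one hz hy)

lemma step1 {f g : (Fin d → ℝ) → ℝ} (hg : Measurable g)
    (hgL2 : Integrable (fun y => g y ^ 2) (volume.restrict (Icc (0 : Fin d → ℝ) 1)))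
    (hrepr : ∀ z ∈ Icc (0 : Fin d → ℝ) 1,
      f z ^ 2 = ∫ y in Icc (0 : Fin d → ℝ) 1, kerK z y * g y ^ 2)
    (z : Fin d → ℝ) (hz : z ∈ Icc (0:Fin d → ℝ) 1) :
    ENNReal.ofReal (f z ^ 2) = ∫⁻ t in Icc (0:Fin d → ℝ) 1, φ z t * Hfun g t := by
  rw [hrepr z hz]
  rw [ofReal_integral_eq_lintegral_ofReal (kerK_int hg hgL2 z hz)
    (by filter_upwards [ae_restrict_mem measurableSet_Icc] with y hy
        exact mul_nonneg (kerK_nonneg hz hy) (sq_nonneg _))]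
  have e1 : ∫⁻ y in Icc (0:Fin d → ℝ) 1, ENNReal.ofReal (kerK z y * g y ^ 2)
      = ∫⁻ y in Icc (0:Fin d → ℝ) 1, ∫⁻ t in Icc (0:Fin d → ℝ) 1,
          φ z t * φ y t * ENNReal.ofReal (g y ^ 2) := by
    refine lintegral_congr_ae ?_
    filter_upwards [ae_restrict_mem measurableSet_Icc] with y hy
    rw [ENNReal.ofReal_mul (kerK_nonneg hz hy), ker_eq hz hy,
      ← lintegral_mul_const' (ENNReal.ofReal (g y ^ 2)) _ ENNReal.ofReal_ne_top]
  rw [e1, lintegral_lintegral_swap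
    ((((φ_meas_right z).comp measurable_snd).mul φ_meas).mul
      ((ENNReal.measurable_ofReal.comp ((hg.comp measurable_fst).pow_const 2)))).aemeasurable]
  refine lintegral_congr fun t => ?_
  rw [Hfun, ← lintegral_const_mul' (φ z t) _ (φ_ne_top z t)]
  exact lintegral_congr fun y => by ring



end SamplingAux

namespace SamplingAux

variable {d : ℕ}

instance cubeFinite : IsFiniteMeasure (volume.restrict (Icc (0:Fin d → ℝ) 1)) := by
  constructor
  rw [Measure.restrict_apply_univ, cube_vol]
  exact ENNReal.one_lt_top

lemma f_sq_int {f g : (Fin d → ℝ) → ℝ} (hf : Measurable f) (hg : Measurable g)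
    (hgL2 : Integrable (fun y => g y ^ 2) (volume.restrict (Icc (0 : Fin d → ℝ) 1)))
    (hrepr : ∀ z ∈ Icc (0 : Fin d → ℝ) 1,
      f z ^ 2 = ∫ y in Icc (0 : Fin d → ℝ) 1, kerK z y * g y ^ 2) :
    Integrable (fun z => f z ^ 2) (volume.restrict (Icc (0 : Fin d → ℝ) 1)) := by
  refine (integrable_const (∫ y in Icc (0:Fin d → ℝ) 1, g y ^ 2)).mono'
    ((hf.pow_const 2).aestronglyMeasurable) ?_
  filter_upwards [ae_restrict_mem measurableSet_Icc] with z hz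
  rw [Real.norm_eq_abs, abs_of_nonneg (sq_nonneg _), hrepr z hz]
  refine integral_mono_ae (kerK_int hg hgL2 z hz) hgL2 ?_
  filter_upwards [ae_restrict_mem measurableSet_Icc] with y hy
  exact mul_le_of_le_one_left (sq_nonneg _) (kerK_le_one hz hy)

lemma step2 {f g : (Fin d → ℝ) → ℝ} (hf : Measurable f) (hg : Measurable g)
    (hgL2 : Integrable (fun y => g y ^ 2) (volume.restrict (Icc (0 : Fin d → ℝ) 1)))
    (hrepr : ∀ z ∈ Icc (0 : Fin d → ℝ) 1,
      f z ^ 2 = ∫ y in Icc (0 : Fin d → ℝ) 1, kerK z y * g y ^ 2) :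
    ENNReal.ofReal (∫ z in Icc (0:Fin d → ℝ) 1, f z ^ 2)
      = ∫⁻ t in Icc (0:Fin d → ℝ) 1, volume (Icc (0:Fin d → ℝ) t) * Hfun g t := by
  rw [ofReal_integral_eq_lintegral_ofReal (f_sq_int hf hg hgL2 hrepr)
    (Filter.Eventually.of_forall fun z => sq_nonneg _)]
  rw [lintegral_congr_ae ((ae_restrict_mem measurableSet_Icc).mono
    (fun z hz => step1 hg hgL2 hrepr z hz))]
  rw [lintegral_lintegral_swap (φ_meas.mul ((Hfun_meas g hg).comp measurable_snd)).aemeasurable]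
  refine lintegral_congr_ae ?_
  filter_upwards [ae_restrict_mem measurableSet_Icc] with t ht
  rw [lintegral_mul_const' (Hfun g t) _ (Hfun_ne_top hgL2 t)]
  have hind : ∫⁻ z in Icc (0:Fin d → ℝ) 1, φ z t = volume (Icc (0:Fin d → ℝ) t) := by
    have heq : (fun z => φ z t) = ({a : Fin d → ℝ | ∀ i, a i < t i}).indicator 1 := by
      funext a; simp [φ, Set.indicator_apply]
    rw [heq, lintegral_indicator_one (lowSet_meas t), meas_lower t ht]
  rw [hind]

lemma step3 {N : ℕ} (x : Fin N → Fin d → ℝ) (hx : ∀ j, x j ∈ Icc (0:Fin d → ℝ) 1)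
    {f g : (Fin d → ℝ) → ℝ} (hg : Measurable g)
    (hgL2 : Integrable (fun y => g y ^ 2) (volume.restrict (Icc (0 : Fin d → ℝ) 1)))
    (hrepr : ∀ z ∈ Icc (0 : Fin d → ℝ) 1,
      f z ^ 2 = ∫ y in Icc (0 : Fin d → ℝ) 1, kerK z y * g y ^ 2) :
    ENNReal.ofReal (∑ j, f (x j) ^ 2)
      = ∫⁻ t in Icc (0:Fin d → ℝ) 1, (∑ j, φ (x j) t) * Hfun g t := by
  rw [ENNReal.ofReal_sum_of_nonneg (fun j _ => sq_nonneg _)]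
  rw [Finset.sum_congr rfl (fun j _ => step1 hg hgL2 hrepr (x j) (hx j))]
  rw [← lintegral_finset_sum _ (f := fun j t => φ (x j) t * Hfun g t) (fun j _ => ((φ_meas_right (x j)).mul (Hfun_meas g hg)))]
  exact lintegral_congr fun t => by rw [Finset.sum_mul]

lemma disc_term_le {ι : Type*} [Fintype ι] (p : ι → (Fin d → ℝ)) {t : Fin d → ℝ}
    (ht : t ∈ Icc (0:Fin d → ℝ) 1) :
    |(volume (Icc (0:Fin d → ℝ) t)).toReal -
      (∑ n, (Icc (0:Fin d → ℝ) t).indicator (fun _ => (1:ℝ)) (p n)) / (Fintype.card ι : ℝ)|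
      ≤ starDisc p := by
  have hbdd : BddAbove (Set.range fun x : (Set.Icc (0:Fin d → ℝ) 1) =>
      |(volume (Set.Icc (0:Fin d → ℝ) x.1)).toReal -
        (∑ n, (Set.Icc (0:Fin d → ℝ) x.1).indicator (fun _ => (1:ℝ)) (p n)) /
          (Fintype.card ι : ℝ)|) := by
    refine ⟨2, ?_⟩
    rintro r ⟨u, rfl⟩
    have h1 : (volume (Icc (0:Fin d → ℝ) u.1)).toReal ≤ 1 := by
      have hm : volume (Icc (0:Fin d → ℝ) u.1) ≤ 1 := by
        rw [← cube_vol (d := d)]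
        exact measure_mono (Icc_subset_Icc le_rfl u.2.2)
      simpa using ENNReal.toReal_mono ENNReal.one_ne_top hm
    have h2 : (0:ℝ) ≤ (volume (Icc (0:Fin d → ℝ) u.1)).toReal := ENNReal.toReal_nonneg
    have h3 : (0:ℝ) ≤ ∑ n, (Icc (0:Fin d → ℝ) u.1).indicator (fun _ => (1:ℝ)) (p n) :=
      Finset.sum_nonneg fun n _ => Set.indicator_nonneg (fun _ _ => zero_le_one) _
    have h4 : (∑ n, (Icc (0:Fin d → ℝ) u.1).indicator (fun _ => (1:ℝ)) (p n))
        ≤ (Fintype.card ι : ℝ) := by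
      calc (∑ n, (Icc (0:Fin d → ℝ) u.1).indicator (fun _ => (1:ℝ)) (p n))
          ≤ ∑ _n : ι, (1:ℝ) := Finset.sum_le_sum fun n _ => by
            by_cases h : p n ∈ Icc (0:Fin d → ℝ) u.1 <;> simp [h]
        _ = (Fintype.card ι : ℝ) := by simp
    have h5 : (0:ℝ) ≤ (∑ n, (Icc (0:Fin d → ℝ) u.1).indicator (fun _ => (1:ℝ)) (p n)) /
        (Fintype.card ι : ℝ) := div_nonneg h3 (Nat.cast_nonneg _)
    have h6 : (∑ n, (Icc (0:Fin d → ℝ) u.1).indicator (fun _ => (1:ℝ)) (p n)) /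
        (Fintype.card ι : ℝ) ≤ 1 := div_le_one_of_le₀ h4 (Nat.cast_nonneg _)
    rw [abs_le]
    constructor <;> simp only [neg_le, le_sub_iff_add_le, sub_le_iff_le_add] <;> linarith
  exact le_ciSup hbdd (⟨t, ht⟩ : (Set.Icc (0:Fin d → ℝ) 1))

lemma starDisc_nonneg {ι : Type*} [Fintype ι] (p : ι → (Fin d → ℝ)) : 0 ≤ starDisc p :=
  Real.iSup_nonneg fun _ => abs_nonneg _

lemma ae_count {N : ℕ} (x : Fin N → Fin d → ℝ) (hx : ∀ j, x j ∈ Icc (0:Fin d → ℝ) 1) :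
    ∀ᵐ t ∂(volume.restrict (Icc (0:Fin d → ℝ) 1)),
      (∑ j, φ (x j) t)
        = ENNReal.ofReal (∑ j, (Icc (0:Fin d → ℝ) t).indicator (fun _ => (1:ℝ)) (x j)) := by
  have hae : ∀ᵐ t ∂(volume : Measure (Fin d → ℝ)), ∀ j i, t i ≠ x j i := by
    rw [ae_all_iff]; intro j; rw [ae_all_iff]; intro i
    rw [volume_pi]
    exact MeasureTheory.Measure.ae_eval_ne (fun _ : Fin d => (volume : Measure ℝ)) i (x j i)
  filter_upwards [ae_restrict_of_ae hae] with t hne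
  rw [ENNReal.ofReal_sum_of_nonneg (fun j _ => Set.indicator_nonneg (fun _ _ => zero_le_one) _)]
  refine Finset.sum_congr rfl fun j _ => ?_
  have hiff : (∀ i, x j i < t i) ↔ x j ∈ Icc (0:Fin d → ℝ) t := by
    rw [Set.mem_Icc]
    constructor
    · intro h; exact ⟨(hx j).1, fun i => le_of_lt (h i)⟩
    · rintro ⟨-, h2⟩ i; exact lt_of_le_of_ne (h2 i) fun heq => hne j i heq.symm
  by_cases hj : ∀ i, x j i < t i
  · simp [φ, hj, Set.indicator_of_mem (hiff.1 hj)]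
  · have hnm : x j ∉ Icc (0:Fin d → ℝ) t := fun hm => hj (hiff.2 hm)
    simp [φ, hj, Set.indicator_of_notMem hnm]

end SamplingAux

namespace SamplingAux

lemma core {d N : ℕ} (hN : 0 < N) (x : Fin N → Fin d → ℝ)
    (hx : ∀ j, x j ∈ Icc (0:Fin d → ℝ) 1)
    {f g : (Fin d → ℝ) → ℝ} (hf : Measurable f) (hg : Measurable g)
    (hgL2 : Integrable (fun y => g y ^ 2) (volume.restrict (Icc (0 : Fin d → ℝ) 1)))
    (hrepr : ∀ z ∈ Icc (0 : Fin d → ℝ) 1,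
      f z ^ 2 = ∫ y in Icc (0 : Fin d → ℝ) 1, kerK z y * g y ^ 2) :
    |(1 / (N:ℝ)) * ∑ j, f (x j) ^ 2 - ∫ z in Icc (0:Fin d → ℝ) 1, f z ^ 2|
      ≤ starDisc x * ∫ y in Icc (0:Fin d → ℝ) 1, g y ^ 2 := by
  have hNpos : (0:ℝ) < N := Nat.cast_pos.2 hN
  have hD0 : 0 ≤ starDisc x := starDisc_nonneg x
  have hF0 : 0 ≤ ∫ z in Icc (0:Fin d → ℝ) 1, f z ^ 2 := integral_nonneg fun z => sq_nonneg _
  have hCg0 : 0 ≤ ∫ y in Icc (0:Fin d → ℝ) 1, g y ^ 2 := integral_nonneg fun z => sq_nonneg _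
  have hSf0 : 0 ≤ ∑ j, f (x j) ^ 2 := Finset.sum_nonneg fun j _ => sq_nonneg _
  have hNDCg0 : 0 ≤ (N:ℝ) * starDisc x * ∫ y in Icc (0:Fin d → ℝ) 1, g y ^ 2 :=
    mul_nonneg (mul_nonneg (Nat.cast_nonneg N) hD0) hCg0
  -- the a.e. two-sided bound
  have hmain : ∀ᵐ t ∂(volume.restrict (Icc (0:Fin d → ℝ) 1)),
      ((∑ j, φ (x j) t) ≤ ENNReal.ofReal (N:ℝ) * volume (Icc (0:Fin d → ℝ) t)
          + ENNReal.ofReal ((N:ℝ) * starDisc x)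
       ∧ ENNReal.ofReal (N:ℝ) * volume (Icc (0:Fin d → ℝ) t)
          ≤ (∑ j, φ (x j) t) + ENNReal.ofReal ((N:ℝ) * starDisc x)) := by
    filter_upwards [ae_count x hx, ae_restrict_mem measurableSet_Icc] with t hct ht
    obtain ⟨A, hA⟩ : ∃ r, r = (volume (Icc (0:Fin d → ℝ) t)).toReal := ⟨_, rfl⟩
    obtain ⟨B, hB⟩ : ∃ r, r = ∑ j, (Icc (0:Fin d → ℝ) t).indicator (fun _ => (1:ℝ)) (x j) :=
      ⟨_, rfl⟩
    have hA0 : 0 ≤ A := hA ▸ ENNReal.toReal_nonneg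
    have hB0 : 0 ≤ B := hB ▸ Finset.sum_nonneg
      (fun j _ => Set.indicator_nonneg (fun _ _ => zero_le_one) _)
    have hdisc := disc_term_le x ht
    rw [Fintype.card_fin, ← hA, ← hB, abs_le] at hdisc
    have hup : B ≤ (N:ℝ) * A + (N:ℝ) * starDisc x := by
      have hq : B / N ≤ A + starDisc x := by linarith [hdisc.1]
      have h2 : (B / N) * N = B := by field_simp
      nlinarith [mul_le_mul_of_nonneg_right hq hNpos.le]
    have hlow : (N:ℝ) * A ≤ B + (N:ℝ) * starDisc x := by
      have hq : A - starDisc x ≤ B / N := by linarith [hdisc.2]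
      have h2 : (B / N) * N = B := by field_simp
      nlinarith [mul_le_mul_of_nonneg_right hq hNpos.le]
    have hvolA : ENNReal.ofReal (N:ℝ) * volume (Icc (0:Fin d → ℝ) t)
        = ENNReal.ofReal ((N:ℝ) * A) := by
      rw [ENNReal.ofReal_mul (Nat.cast_nonneg N)]
      congr 1
      rw [hA, ENNReal.ofReal_toReal (vol_ne_top t)]
    constructor
    · rw [hct, ← hB, hvolA,
        ← ENNReal.ofReal_add (mul_nonneg (Nat.cast_nonneg N) hA0)
          (mul_nonneg (Nat.cast_nonneg N) hD0)]
      exact ENNReal.ofReal_le_ofReal hup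
    · rw [hct, ← hB, hvolA,
        ← ENNReal.ofReal_add hB0 (mul_nonneg (Nat.cast_nonneg N) hD0)]
      exact ENNReal.ofReal_le_ofReal hlow
  have hHm := Hfun_meas g hg
  have hSm : Measurable fun t => (∑ j, φ (x j) t) * Hfun g t :=
    (Finset.measurable_sum _ fun j _ => φ_meas_right (x j)).mul hHm
  have hAm : Measurable fun t =>
      ENNReal.ofReal (N:ℝ) * volume (Icc (0:Fin d → ℝ) t) * Hfun g t :=
    (measurable_const.mul vol_meas).mul hHm
  have hIH_le : ∫⁻ t in Icc (0:Fin d → ℝ) 1, Hfun g t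
      ≤ ENNReal.ofReal (∫ y in Icc (0:Fin d → ℝ) 1, g y ^ 2) := by
    calc ∫⁻ t in Icc (0:Fin d → ℝ) 1, Hfun g t
        ≤ ∫⁻ _t in Icc (0:Fin d → ℝ) 1,
            (∫⁻ y in Icc (0:Fin d → ℝ) 1, ENNReal.ofReal (g y ^ 2)) :=
          lintegral_mono fun t => Hfun_le g t
      _ = (∫⁻ y in Icc (0:Fin d → ℝ) 1, ENNReal.ofReal (g y ^ 2))
            * volume (Icc (0:Fin d → ℝ) 1) := setLIntegral_const _ _
      _ = ENNReal.ofReal (∫ y in Icc (0:Fin d → ℝ) 1, g y ^ 2) := by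
          rw [cube_vol, mul_one, ← hCg_eq hgL2]
  -- upper bound
  have hup2 : ENNReal.ofReal (∑ j, f (x j) ^ 2)
      ≤ ENNReal.ofReal ((N:ℝ) * (∫ z in Icc (0:Fin d → ℝ) 1, f z ^ 2)
          + (N:ℝ) * starDisc x * ∫ y in Icc (0:Fin d → ℝ) 1, g y ^ 2) := by
    rw [step3 x hx hg hgL2 hrepr]
    calc ∫⁻ t in Icc (0:Fin d → ℝ) 1, (∑ j, φ (x j) t) * Hfun g t
        ≤ ∫⁻ t in Icc (0:Fin d → ℝ) 1,
            (ENNReal.ofReal (N:ℝ) * volume (Icc (0:Fin d → ℝ) t)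
              + ENNReal.ofReal ((N:ℝ) * starDisc x)) * Hfun g t := by
          refine lintegral_mono_ae ?_
          filter_upwards [hmain] with t h
          exact mul_le_mul_left h.1 _
      _ = (∫⁻ t in Icc (0:Fin d → ℝ) 1,
            ENNReal.ofReal (N:ℝ) * volume (Icc (0:Fin d → ℝ) t) * Hfun g t)
            + ∫⁻ t in Icc (0:Fin d → ℝ) 1, ENNReal.ofReal ((N:ℝ) * starDisc x) * Hfun g t := by
          rw [← lintegral_add_left hAm]
          exact lintegral_congr fun t => by ring
      _ = ENNReal.ofReal (N:ℝ)
            * (∫⁻ t in Icc (0:Fin d → ℝ) 1, volume (Icc (0:Fin d → ℝ) t) * Hfun g t)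
            + ENNReal.ofReal ((N:ℝ) * starDisc x) * ∫⁻ t in Icc (0:Fin d → ℝ) 1, Hfun g t := by
          rw [← lintegral_const_mul' (ENNReal.ofReal ((N:ℝ) * starDisc x)) _
              ENNReal.ofReal_ne_top,
            ← lintegral_const_mul' (ENNReal.ofReal (N:ℝ)) _ ENNReal.ofReal_ne_top]
          congr 1
          exact lintegral_congr fun t => by ring
      _ ≤ ENNReal.ofReal (N:ℝ) * ENNReal.ofReal (∫ z in Icc (0:Fin d → ℝ) 1, f z ^ 2)
            + ENNReal.ofReal ((N:ℝ) * starDisc x)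
              * ENNReal.ofReal (∫ y in Icc (0:Fin d → ℝ) 1, g y ^ 2) := by
          rw [← step2 hf hg hgL2 hrepr]
          exact add_le_add le_rfl (mul_le_mul_right hIH_le _)
      _ = ENNReal.ofReal ((N:ℝ) * (∫ z in Icc (0:Fin d → ℝ) 1, f z ^ 2)
            + (N:ℝ) * starDisc x * ∫ y in Icc (0:Fin d → ℝ) 1, g y ^ 2) := by
          rw [ENNReal.ofReal_add (mul_nonneg (Nat.cast_nonneg N) hF0) hNDCg0,
            ENNReal.ofReal_mul (Nat.cast_nonneg N),
            ENNReal.ofReal_mul (mul_nonneg (Nat.cast_nonneg N) hD0),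
            ENNReal.ofReal_mul (Nat.cast_nonneg N),
            ENNReal.ofReal_mul (Nat.cast_nonneg N)]
  have hup3 : ∑ j, f (x j) ^ 2 ≤ (N:ℝ) * (∫ z in Icc (0:Fin d → ℝ) 1, f z ^ 2)
      + (N:ℝ) * starDisc x * ∫ y in Icc (0:Fin d → ℝ) 1, g y ^ 2 :=
    (ENNReal.ofReal_le_ofReal_iff
      (add_nonneg (mul_nonneg (Nat.cast_nonneg N) hF0) hNDCg0)).1 hup2
  -- lower bound
  have hlow2 : ENNReal.ofReal ((N:ℝ) * ∫ z in Icc (0:Fin d → ℝ) 1, f z ^ 2)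
      ≤ ENNReal.ofReal ((∑ j, f (x j) ^ 2)
          + (N:ℝ) * starDisc x * ∫ y in Icc (0:Fin d → ℝ) 1, g y ^ 2) := by
    rw [ENNReal.ofReal_mul (Nat.cast_nonneg N), step2 hf hg hgL2 hrepr,
      ← lintegral_const_mul' (ENNReal.ofReal (N:ℝ)) _ ENNReal.ofReal_ne_top]
    calc ∫⁻ t in Icc (0:Fin d → ℝ) 1,
          ENNReal.ofReal (N:ℝ) * (volume (Icc (0:Fin d → ℝ) t) * Hfun g t)
        ≤ ∫⁻ t in Icc (0:Fin d → ℝ) 1,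
            ((∑ j, φ (x j) t) + ENNReal.ofReal ((N:ℝ) * starDisc x)) * Hfun g t := by
          refine lintegral_mono_ae ?_
          filter_upwards [hmain] with t h
          calc ENNReal.ofReal (N:ℝ) * (volume (Icc (0:Fin d → ℝ) t) * Hfun g t)
              = (ENNReal.ofReal (N:ℝ) * volume (Icc (0:Fin d → ℝ) t)) * Hfun g t := by ring
            _ ≤ _ := mul_le_mul_left h.2 _
      _ = (∫⁻ t in Icc (0:Fin d → ℝ) 1, (∑ j, φ (x j) t) * Hfun g t)
            + ENNReal.ofReal ((N:ℝ) * starDisc x) * ∫⁻ t in Icc (0:Fin d → ℝ) 1, Hfun g t := by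
          rw [← lintegral_const_mul' (ENNReal.ofReal ((N:ℝ) * starDisc x)) _
              ENNReal.ofReal_ne_top,
            ← lintegral_add_left hSm]
          exact lintegral_congr fun t => by ring
      _ ≤ ENNReal.ofReal (∑ j, f (x j) ^ 2)
            + ENNReal.ofReal ((N:ℝ) * starDisc x)
              * ENNReal.ofReal (∫ y in Icc (0:Fin d → ℝ) 1, g y ^ 2) := by
          rw [← step3 x hx hg hgL2 hrepr]
          exact add_le_add le_rfl (mul_le_mul_right hIH_le _)
      _ = ENNReal.ofReal ((∑ j, f (x j) ^ 2)
            + (N:ℝ) * starDisc x * ∫ y in Icc (0:Fin d → ℝ) 1, g y ^ 2) := by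
          rw [ENNReal.ofReal_add hSf0 hNDCg0,
            ENNReal.ofReal_mul (mul_nonneg (Nat.cast_nonneg N) hD0)]
  have hlow3 : (N:ℝ) * (∫ z in Icc (0:Fin d → ℝ) 1, f z ^ 2)
      ≤ (∑ j, f (x j) ^ 2)
        + (N:ℝ) * starDisc x * ∫ y in Icc (0:Fin d → ℝ) 1, g y ^ 2 :=
    (ENNReal.ofReal_le_ofReal_iff (add_nonneg hSf0 hNDCg0)).1 hlow2
  -- conclusion, real arithmetic
  rw [abs_le]
  have hkey1 : ∫ z in Icc (0:Fin d → ℝ) 1, f z ^ 2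
      ≤ (1 / (N:ℝ)) * (∑ j, f (x j) ^ 2)
        + starDisc x * ∫ y in Icc (0:Fin d → ℝ) 1, g y ^ 2 := by
    refine le_of_mul_le_mul_left ?_ hNpos
    calc (N:ℝ) * ∫ z in Icc (0:Fin d → ℝ) 1, f z ^ 2
        ≤ (∑ j, f (x j) ^ 2)
          + (N:ℝ) * starDisc x * ∫ y in Icc (0:Fin d → ℝ) 1, g y ^ 2 := hlow3
      _ = (N:ℝ) * ((1 / (N:ℝ)) * (∑ j, f (x j) ^ 2)
          + starDisc x * ∫ y in Icc (0:Fin d → ℝ) 1, g y ^ 2) := by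
          field_simp
  have hkey2 : (1 / (N:ℝ)) * (∑ j, f (x j) ^ 2)
      ≤ (∫ z in Icc (0:Fin d → ℝ) 1, f z ^ 2)
        + starDisc x * ∫ y in Icc (0:Fin d → ℝ) 1, g y ^ 2 := by
    refine le_of_mul_le_mul_left ?_ hNpos
    calc (N:ℝ) * ((1 / (N:ℝ)) * (∑ j, f (x j) ^ 2))
        = ∑ j, f (x j) ^ 2 := by field_simp
      _ ≤ (N:ℝ) * (∫ z in Icc (0:Fin d → ℝ) 1, f z ^ 2)
          + (N:ℝ) * starDisc x * ∫ y in Icc (0:Fin d → ℝ) 1, g y ^ 2 := hup3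
      _ = (N:ℝ) * ((∫ z in Icc (0:Fin d → ℝ) 1, f z ^ 2)
          + starDisc x * ∫ y in Icc (0:Fin d → ℝ) 1, g y ^ 2) := by ring
  constructor
  · linarith
  · linarith

end SamplingAux


theorem sampling_inequality_Hilbert_space {d N : ℕ}
    (x : Fin N → Fin d → ℝ) (hx : ∀ j, x j ∈ Set.Icc (0 : Fin d → ℝ) 1)
    (γ : ℝ) (hγ : γ ∈ Set.Ioc (0:ℝ) 1)
    (f g : (Fin d → ℝ) → ℝ) (hf : Measurable f) (hg : Measurable g)
    (hgL2 : Integrable (fun y => g y ^ 2) (volume.restrict (Set.Icc (0 : Fin d → ℝ) 1)))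
    (hrepr : ∀ z ∈ Set.Icc (0 : Fin d → ℝ) 1,
      f z ^ 2 = ∫ y in Set.Icc (0 : Fin d → ℝ) 1, kerK z y * g y ^ 2)
    (hγfg : γ * ∫ y in Set.Icc (0 : Fin d → ℝ) 1, g y ^ 2
      ≤ ∫ y in Set.Icc (0 : Fin d → ℝ) 1, f y ^ 2) :
    (1 - starDisc x / γ) * (∫ y in Set.Icc (0 : Fin d → ℝ) 1, f y ^ 2)
        ≤ (1 / (N : ℝ)) * ∑ j, f (x j) ^ 2 ∧
    (1 / (N : ℝ)) * ∑ j, f (x j) ^ 2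
        ≤ (1 + starDisc x / γ) * ∫ y in Set.Icc (0 : Fin d → ℝ) 1, f y ^ 2 := by
  obtain ⟨hγ0, hγ1⟩ := hγ
  have hD0 : 0 ≤ starDisc x := SamplingAux.starDisc_nonneg x
  have hF0 : 0 ≤ ∫ y in Set.Icc (0:Fin d → ℝ) 1, f y ^ 2 := integral_nonneg fun z => sq_nonneg _
  have hq0 : 0 ≤ starDisc x / γ := div_nonneg hD0 hγ0.le
  rcases Nat.eq_zero_or_pos N with hN0 | hN
  · subst hN0
    have hsum : (∑ j : Fin 0, f (x j) ^ 2) = 0 := by simp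
    have hD1 : (1:ℝ) ≤ starDisc x := by
      have h := SamplingAux.disc_term_le x (t := (1:Fin d → ℝ)) (Set.right_mem_Icc.2 zero_le_one)
      simpa [SamplingAux.cube_vol] using h
    have hq1 : (1:ℝ) ≤ starDisc x / γ := (one_le_div hγ0).2 (hγ1.trans hD1)
    constructor
    · rw [hsum, mul_zero]
      nlinarith
    · rw [hsum, mul_zero]
      exact mul_nonneg (by linarith) hF0
  · have hcore := SamplingAux.core hN x hx hf hg hgL2 hrepr
    rw [abs_le] at hcore
    have hDCg : starDisc x * (∫ y in Set.Icc (0:Fin d → ℝ) 1, g y ^ 2)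
        ≤ starDisc x / γ * ∫ y in Set.Icc (0:Fin d → ℝ) 1, f y ^ 2 := by
      rw [div_mul_eq_mul_div, le_div_iff₀ hγ0]
      calc starDisc x * (∫ y in Set.Icc (0:Fin d → ℝ) 1, g y ^ 2) * γ
          = starDisc x * (γ * ∫ y in Set.Icc (0:Fin d → ℝ) 1, g y ^ 2) := by ring
        _ ≤ starDisc x * ∫ y in Set.Icc (0:Fin d → ℝ) 1, f y ^ 2 :=
            mul_le_mul_of_nonneg_left hγfg hD0
    constructor
    · nlinarith [hcore.1, hcore.2]
    · nlinarith [hcore.1, hcore.2]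
end

section
/- Let N ≥ 2 and let Ω_1,…,Ω_N be an equivolume partition of [0,1]^d. Then it is not the case that for every i ∈ {1,…,N} and Lebesgue-almost every x ∈ [0,1]^d one has N·λ(Ω_i ∩ [0,x]) = λ([0,x]). Consequently, there exists x ∈ [0,1]^d with ∑_{i=1}^N λ(Ω_i ∩ [0,x])² > λ([0,x])²/N, i.e., a point x at which the stratified-sample variance N·λ([0,x]) − N²·∑_i λ(Ω_i ∩ [0,x])² is strictly smaller than the Monte Carlo variance N·λ([0,x])·(1 − λ([0,x])). -/
open MeasureTheory Real Set
open scoped ENNReal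

def IsEquivolumePartition {d N : ℕ} (Os : Fin N → Set (Fin d → ℝ)) : Prop :=
  (∀ i, MeasurableSet (Os i)) ∧
  (Pairwise fun i j => Disjoint (Os i) (Os j)) ∧
  (⋃ i, Os i) = Set.Icc (0 : Fin d → ℝ) 1 ∧
  ∀ i, volume (Os i) = (N : ℝ≥0∞)⁻¹

open Finset in
lemma strict_cs {N : ℕ} (hN : 0 < N) (a : Fin N → ℝ) (j0 : Fin N)
    (hne : (N : ℝ) * a j0 ≠ ∑ j, a j) :
    (∑ j, a j) ^ 2 / N < ∑ j, a j ^ 2 := by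
  set s := ∑ j, a j with hs
  have hNR : (0 : ℝ) < N := by exact_mod_cast hN
  have hpos : 0 < ∑ j, (a j - s / N) ^ 2 := by
    refine Finset.sum_pos' (fun j _ => sq_nonneg _) ⟨j0, Finset.mem_univ _, ?_⟩
    have : a j0 - s / N ≠ 0 := by
      intro h
      apply hne
      have : a j0 = s / N := by linarith
      rw [this]; field_simp
    positivity
  have expand : ∑ j, (a j - s / N) ^ 2 = (∑ j, a j ^ 2) - s ^ 2 / N := by
    have h1 : ∀ j ∈ Finset.univ, (a j - s / N) ^ 2
        = a j ^ 2 - (2 * s / N) * a j + (s / N) ^ 2 := by intros; ring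
    rw [Finset.sum_congr rfl h1, Finset.sum_add_distrib, Finset.sum_sub_distrib,
      ← Finset.mul_sum, Finset.sum_const, Finset.card_univ, Fintype.card_fin, ← hs]
    field_simp
    have hN0 : (N:ℝ) ≠ 0 := hNR.ne'
    have : (N:ℝ) * (N • (s^2/(N:ℝ)^2)) = s^2 := by rw [nsmul_eq_mul]; field_simp
    linarith
  linarith [expand ▸ hpos]

lemma pi_measSpace_eq_generateFrom_Iic (d : ℕ) :
    (inferInstance : MeasurableSpace (Fin d → ℝ)) =
      MeasurableSpace.generateFrom (Set.range (Set.Iic : (Fin d → ℝ) → Set (Fin d → ℝ))) := by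
  have h1 : ∀ _i : Fin d, MeasurableSpace.generateFrom (Set.range (Set.Iic : ℝ → Set ℝ))
      = (inferInstance : MeasurableSpace ℝ) := fun _ =>
    ((BorelSpace.measurable_eq (α := ℝ)).trans (borel_eq_generateFrom_Iic ℝ)).symm
  have h2 : ∀ _i : Fin d, IsCountablySpanning (Set.range (Set.Iic : ℝ → Set ℝ)) := fun _ =>
    ⟨fun n => Iic (n : ℝ), fun n => mem_range_self _, by
      ext x; simp only [mem_iUnion, mem_Iic, mem_univ, iff_true]
      exact ⟨⌈x⌉₊, Nat.le_ceil x⟩⟩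
  have key := generateFrom_eq_pi h1 h2
  have himg : (pi univ '' pi univ fun _ : Fin d => Set.range (Set.Iic : ℝ → Set ℝ))
      = Set.range (Set.Iic : (Fin d → ℝ) → Set (Fin d → ℝ)) := by
    ext S
    constructor
    · rintro ⟨t, ht, rfl⟩
      choose x hx using fun i => ht i (mem_univ i)
      have : t = fun i => Iic (x i) := funext fun i => (hx i).symm
      subst this
      exact ⟨x, (pi_univ_Iic x).symm⟩
    · rintro ⟨x, rfl⟩
      exact ⟨fun i => Iic (x i), fun i _ => mem_range_self _, pi_univ_Iic x⟩
  rw [himg] at key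
  exact key.symm

lemma no_ae_uniform {d N : ℕ} (hN : 2 ≤ N) (Os : Fin N → Set (Fin d → ℝ))
    (hmeas : ∀ i, MeasurableSet (Os i))
    (hcover : (⋃ i, Os i) = Set.Icc (0 : Fin d → ℝ) 1)
    (hvol : ∀ i, volume (Os i) = (N : ℝ≥0∞)⁻¹) :
    ¬ (∀ i : Fin N, ∀ᵐ x ∂(volume.restrict (Set.Icc (0 : Fin d → ℝ) 1)),
        (N : ℝ) * (volume (Os i ∩ Set.Icc 0 x)).toReal
          = (volume (Set.Icc (0 : Fin d → ℝ) x)).toReal) := by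
  intro h
  set box := Set.Icc (0 : Fin d → ℝ) 1 with hbox
  have hboxm : MeasurableSet box := measurableSet_Icc
  have hvolbox : volume box = 1 := by
    rw [hbox, Real.volume_Icc_pi]; simp
  have hNpos : 0 < N := by omega
  have hN0 : (N : ℝ≥0∞) ≠ 0 := by exact_mod_cast hNpos.ne'
  have hNtop : (N : ℝ≥0∞) ≠ ⊤ := ENNReal.natCast_ne_top N
  have hNR : (0 : ℝ) < N := by exact_mod_cast hNpos
  have hNR1 : (1 : ℝ) ≤ N := by exact_mod_cast hNpos
  set i0 : Fin N := ⟨0, hNpos⟩ with hi0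
  have hsub : Os i0 ⊆ box := by rw [← hcover]; exact subset_iUnion Os i0
  have hfin : ∀ A : Set (Fin d → ℝ), A ⊆ box → volume A ≠ ⊤ := fun A hA =>
    (lt_of_le_of_lt (measure_mono hA) (by rw [hvolbox]; exact ENNReal.one_lt_top)).ne
  set P : (Fin d → ℝ) → Prop := fun x =>
    (N : ℝ) * (volume (Os i0 ∩ Set.Icc 0 x)).toReal
      = (volume (Set.Icc (0 : Fin d → ℝ) x)).toReal with hP
  have hD : volume ({x | ¬ P x} ∩ box) = 0 := by
    have := h i0
    rw [ae_iff] at this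
    rwa [Measure.restrict_apply' hboxm] at this
  set f : (Fin d → ℝ) → ℝ := fun t => (volume (Set.Iic t ∩ Os i0)).toReal with hf
  set g : (Fin d → ℝ) → ℝ := fun t => (volume (Set.Iic t ∩ box)).toReal with hg
  -- box volume facts for membership
  have hIccVol : ∀ x, x ∈ box → volume (Set.Icc (0 : Fin d → ℝ) x) ≠ ⊤ := by
    intro x hx
    exact hfin _ (Set.Icc_subset_Icc_right hx.2)
  have hP' : ∀ x, x ∈ box → P x → (N : ℝ) * f x = g x := by
    intro x hx hPx
    have e1 : Set.Iic x ∩ Os i0 = Os i0 ∩ Set.Icc 0 x := by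
      ext y
      constructor
      · rintro ⟨hy1, hy2⟩
        exact ⟨hy2, (hsub hy2).1, hy1⟩
      · rintro ⟨hy1, hy2, hy3⟩
        exact ⟨hy3, hy1⟩
    have e2 : Set.Iic x ∩ box = Set.Icc 0 x := by
      ext y
      constructor
      · rintro ⟨hy1, hy2, _⟩
        exact ⟨hy2, hy1⟩
      · rintro ⟨hy1, hy2⟩
        exact ⟨hy2, hy1, hy2.trans hx.2⟩
    rw [hf, hg]
    simp only [e1, e2]
    exact hPx
  -- slab bound
  have hslab : ∀ u v : Fin d → ℝ, u ≤ v →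
      volume ((Set.Iic v \ Set.Iic u) ∩ box) ≤ ENNReal.ofReal (∑ j, (v j - u j)) := by
    intro u v huv
    have hsubU : (Set.Iic v \ Set.Iic u) ∩ box ⊆
        ⋃ j, Set.Icc (Function.update (0 : Fin d → ℝ) j (u j))
          (Function.update (1 : Fin d → ℝ) j (v j)) := by
      rintro y ⟨⟨hyv, hyu⟩, hy0, hy1⟩
      rw [Set.mem_Iic] at hyu
      obtain ⟨j, hj⟩ : ∃ j, ¬ y j ≤ u j := by
        by_contra hcon; push_neg at hcon
        exact hyu fun k => hcon k
      refine Set.mem_iUnion.2 ⟨j, ?_, ?_⟩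
      · intro k
        rcases eq_or_ne k j with rfl | hk
        · simpa using le_of_not_ge hj
        · simp [Function.update_of_ne hk]; exact hy0 k
      · intro k
        rcases eq_or_ne k j with rfl | hk
        · simpa using hyv k
        · simp [Function.update_of_ne hk]; exact hy1 k
    refine (measure_mono hsubU).trans ((measure_iUnion_fintype_le _ _).trans ?_)
    have hvolj : ∀ j, volume (Set.Icc (Function.update (0 : Fin d → ℝ) j (u j))
        (Function.update (1 : Fin d → ℝ) j (v j))) ≤ ENNReal.ofReal (v j - u j) := by
      intro j
      rw [Real.volume_Icc_pi]
      rw [Finset.prod_eq_single j]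
      · simp
      · intro k _ hk
        simp [Function.update_of_ne hk]
      · simp
    refine (Finset.sum_le_sum fun j _ => hvolj j).trans ?_
    rw [← ENNReal.ofReal_sum_of_nonneg]
    intro j _
    exact sub_nonneg.2 (huv j)
  -- claim for t in the box
  have claimBox : ∀ t, t ∈ box → (N : ℝ) * f t = g t := by
    intro t ht
    by_cases hzero : ∃ j, t j ≤ 0
    · obtain ⟨j, hj⟩ := hzero
      have hnull : volume (Set.Iic t ∩ box) = 0 := by
        have hsub2 : Set.Iic t ∩ box ⊆
            Set.Icc (0 : Fin d → ℝ) (Function.update (1 : Fin d → ℝ) j 0) := by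
          rintro y ⟨hy1, hy2, hy3⟩
          refine ⟨hy2, fun k => ?_⟩
          rcases eq_or_ne k j with rfl | hk
          · simpa using (hy1 k).trans hj
          · simp [Function.update_of_ne hk]; exact hy3 k
        refine le_antisymm ((measure_mono hsub2).trans_eq ?_) (zero_le)
        rw [Real.volume_Icc_pi]
        apply Finset.prod_eq_zero (Finset.mem_univ j)
        simp
      have hnull2 : volume (Set.Iic t ∩ Os i0) = 0 := by
        refine le_antisymm ((measure_mono ?_).trans_eq hnull) (zero_le)
        exact Set.inter_subset_inter_right _ hsub
      rw [hf, hg]; simp only [hnull, hnull2]; simp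
    · push_neg at hzero
      have habs : ∀ ε : ℝ, 0 < ε → |(N : ℝ) * f t - g t| ≤ ((N : ℝ) * d + 1) * ε := by
        intro ε hε
        set s : Fin d → ℝ := fun j => max (t j - ε) 0 with hsdef
        have hst : ∀ j, s j < t j := fun j => max_lt (by linarith) (hzero j)
        have hse : ∀ j, t j - s j ≤ ε := fun j => by
          simp only [hsdef]; have := le_max_left (t j - ε) 0; linarith
        have hsbox : s ∈ box := ⟨fun j => le_max_right _ _,
          fun j => max_le (by linarith [(ht.2 : t ≤ 1) j]) zero_le_one⟩
        have hposIcc : 0 < volume (Set.Icc s t) := by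
          rw [Real.volume_Icc_pi]
          rw [CanonicallyOrderedAdd.prod_pos]
          exact fun j _ => ENNReal.ofReal_pos.2 (by linarith [hst j])
        have hxex : ∃ x, x ∈ Set.Icc s t ∧ x ∈ box ∧ P x := by
          by_contra hcon
          push_neg at hcon
          have hss : Set.Icc s t ⊆ {x | ¬ P x} ∩ box := by
            intro x hx
            have hxbox : x ∈ box := ⟨le_trans hsbox.1 hx.1, le_trans hx.2 ht.2⟩
            exact ⟨hcon x hx hxbox, hxbox⟩
          exact absurd (le_antisymm ((measure_mono hss).trans_eq hD) (zero_le))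
            hposIcc.ne'
        obtain ⟨x, hxst, hxbox, hPx⟩ := hxex
        have hfx : (N : ℝ) * f x = g x := hP' x hxbox hPx
        have hxt : x ≤ t := hxst.2
        set B := (volume ((Set.Iic t \ Set.Iic x) ∩ box)).toReal with hBdef
        have hB0 : 0 ≤ B := ENNReal.toReal_nonneg
        have hBfin : volume ((Set.Iic t \ Set.Iic x) ∩ box) ≠ ⊤ :=
          hfin _ Set.inter_subset_right
        have hB : B ≤ d * ε := by
          refine ENNReal.toReal_le_of_le_ofReal (by positivity) ?_
          refine (hslab x t hxt).trans (ENNReal.ofReal_le_ofReal ?_)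
          calc ∑ j, (t j - x j) ≤ ∑ _j : Fin d, ε :=
                Finset.sum_le_sum fun j _ => by
                  have := hxst.1 j; have := hse j
                  simp only [hsdef] at *
                  linarith
            _ = d * ε := by simp [Finset.sum_const, Finset.card_univ, mul_comm]
        have hdecomp : ∀ A : Set (Fin d → ℝ), A ⊆ box →
            (volume (Set.Iic t ∩ A)).toReal ≤ (volume (Set.Iic x ∩ A)).toReal + B ∧
            (volume (Set.Iic x ∩ A)).toReal ≤ (volume (Set.Iic t ∩ A)).toReal := by
          intro A hA
          have hfinT : volume (Set.Iic t ∩ A) ≠ ⊤ := hfin _ (Set.inter_subset_right.trans hA)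
          have hfinX : volume (Set.Iic x ∩ A) ≠ ⊤ := hfin _ (Set.inter_subset_right.trans hA)
          constructor
          · have hsub3 : Set.Iic t ∩ A ⊆ (Set.Iic x ∩ A) ∪ ((Set.Iic t \ Set.Iic x) ∩ box) := by
              rintro y ⟨hy1, hy2⟩
              by_cases hyx : y ∈ Set.Iic x
              · exact Or.inl ⟨hyx, hy2⟩
              · exact Or.inr ⟨⟨hy1, hyx⟩, hA hy2⟩
            have := (measure_mono hsub3).trans (measure_union_le (μ := volume) _ _)
            rw [hBdef, ← ENNReal.toReal_add hfinX hBfin]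
            exact ENNReal.toReal_mono (by exact ENNReal.add_ne_top.2 ⟨hfinX, hBfin⟩) this
          · exact ENNReal.toReal_mono hfinT
              (measure_mono (Set.inter_subset_inter_left _ (Set.Iic_subset_Iic.2 hxt)))
        obtain ⟨h1, h2⟩ := hdecomp (Os i0) hsub
        obtain ⟨h3, h4⟩ := hdecomp box Set.Subset.rfl
        have hd0 : (0:ℝ) ≤ (d:ℝ) := Nat.cast_nonneg d
        have hmul1 : (N:ℝ) * f t ≤ (N:ℝ) * (f x + B) :=
          mul_le_mul_of_nonneg_left h1 (le_of_lt hNR)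
        have hNB : (N:ℝ) * B ≤ (N:ℝ) * (d * ε) :=
          mul_le_mul_of_nonneg_left hB (le_of_lt hNR)
        have hmul2 : (N:ℝ) * f x ≤ (N:ℝ) * f t :=
          mul_le_mul_of_nonneg_left h2 (le_of_lt hNR)
        have key1 : (N:ℝ) * f t ≤ g t + (N:ℝ) * (d * ε) := by nlinarith
        have key2 : g t ≤ (N:ℝ) * f t + d * ε := by nlinarith
        have hprod : (0:ℝ) ≤ ((N:ℝ) - 1) * ((d:ℝ) * ε) :=
          mul_nonneg (sub_nonneg.2 hNR1) (mul_nonneg hd0 hε.le)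
        rw [abs_le]
        constructor
        · nlinarith
        · nlinarith
      have : |(N : ℝ) * f t - g t| ≤ 0 := by
        refine le_of_forall_pos_le_add fun ε hε => ?_
        have hc : (0 : ℝ) < (N : ℝ) * d + 1 := by positivity
        have := habs (ε / ((N : ℝ) * d + 1)) (by positivity)
        rw [zero_add]
        calc |(N : ℝ) * f t - g t| ≤ ((N : ℝ) * d + 1) * (ε / ((N : ℝ) * d + 1)) := this
          _ = ε := by field_simp
      have := abs_nonneg ((N : ℝ) * f t - g t)
      have heq : |(N : ℝ) * f t - g t| = 0 := le_antisymm ‹_› ‹_›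
      rw [abs_eq_zero] at heq
      linarith
  -- claim for all t
  have claimAll : ∀ t : Fin d → ℝ, (N : ℝ) * f t = g t := by
    intro t
    by_cases hneg : ∃ j, t j < 0
    · obtain ⟨j, hj⟩ := hneg
      have e1 : Set.Iic t ∩ box = ∅ := by
        apply Set.eq_empty_of_forall_notMem
        rintro y ⟨hy1, hy2, _⟩
        have := (hy2 j).trans (hy1 j)
        rw [Pi.zero_apply] at this
        linarith
      have e2 : Set.Iic t ∩ Os i0 = ∅ := by
        apply Set.eq_empty_of_forall_notMem
        rintro y ⟨hy1, hy2⟩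
        have hyb := hsub hy2
        have := (hyb.1 j).trans (hy1 j)
        rw [Pi.zero_apply] at this
        linarith
      rw [hf, hg]; simp only [e1, e2]; simp
    · push_neg at hneg
      set t' : Fin d → ℝ := fun j => min (t j) 1 with ht'
      have ht'box : t' ∈ box := ⟨fun j => le_min (hneg j) zero_le_one, fun j => min_le_right _ _⟩
      have e3 : Set.Iic t ∩ Os i0 = Set.Iic t' ∩ Os i0 := by
        ext y
        constructor
        · rintro ⟨hy1, hy2⟩
          exact ⟨fun j => le_min (hy1 j) ((hsub hy2).2 j), hy2⟩
        · rintro ⟨hy1, hy2⟩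
          exact ⟨fun j => (hy1 j).trans (min_le_left _ _), hy2⟩
      have e4 : Set.Iic t ∩ box = Set.Iic t' ∩ box := by
        ext y
        constructor
        · rintro ⟨hy1, hy2⟩
          exact ⟨fun j => le_min (hy1 j) (hy2.2 j), hy2⟩
        · rintro ⟨hy1, hy2⟩
          exact ⟨fun j => (hy1 j).trans (min_le_left _ _), hy2⟩
      have := claimBox t' ht'box
      rw [hf, hg] at this ⊢
      simp only [e3, e4]
      exact this
  -- measure extension
  set μ : Measure (Fin d → ℝ) := volume.restrict (Os i0) with hμ
  set ν : Measure (Fin d → ℝ) := ((N : ℝ≥0∞)⁻¹) • volume.restrict box with hν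
  haveI : IsFiniteMeasure μ := by
    constructor
    rw [hμ, Measure.restrict_apply_univ]
    exact (hfin _ hsub).lt_top
  have hμν : ∀ S ∈ Set.range (Set.Iic : (Fin d → ℝ) → Set (Fin d → ℝ)), μ S = ν S := by
    rintro _ ⟨t, rfl⟩
    have hμt : μ (Set.Iic t) = volume (Set.Iic t ∩ Os i0) := by
      rw [hμ, Measure.restrict_apply measurableSet_Iic]
    have hνt : ν (Set.Iic t) = (N : ℝ≥0∞)⁻¹ * volume (Set.Iic t ∩ box) := by
      rw [hν, Measure.smul_apply, Measure.restrict_apply measurableSet_Iic, smul_eq_mul]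
    rw [hμt, hνt]
    have hfin1 : volume (Set.Iic t ∩ Os i0) ≠ ⊤ := hfin _ (Set.inter_subset_right.trans hsub)
    have hfin2 : volume (Set.Iic t ∩ box) ≠ ⊤ := hfin _ Set.inter_subset_right
    have hfin3 : (N : ℝ≥0∞)⁻¹ * volume (Set.Iic t ∩ box) ≠ ⊤ :=
      ENNReal.mul_ne_top (ENNReal.inv_ne_top.2 hN0) hfin2
    rw [← ENNReal.toReal_eq_toReal_iff' hfin1 hfin3]
    rw [ENNReal.toReal_mul, ENNReal.toReal_inv, ENNReal.toReal_natCast]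
    have := claimAll t
    rw [hf, hg] at this
    field_simp
    linarith
  have huniv : μ Set.univ = ν Set.univ := by
    rw [hμ, hν, Measure.restrict_apply_univ, Measure.smul_apply,
      Measure.restrict_apply_univ, smul_eq_mul, hvol i0, hvolbox, mul_one]
  have hpiSys : IsPiSystem (Set.range (Set.Iic : (Fin d → ℝ) → Set (Fin d → ℝ))) := by
    rintro _ ⟨a, rfl⟩ _ ⟨b, rfl⟩ _
    refine ⟨fun j => min (a j) (b j), ?_⟩
    ext y
    simp only [Set.mem_inter_iff, Set.mem_Iic]
    constructor
    · intro hy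
      exact ⟨fun j => (hy j).trans (min_le_left _ _), fun j => (hy j).trans (min_le_right _ _)⟩
    · rintro ⟨ha, hb⟩
      exact fun j => le_min (ha j) (hb j)
  have hμeq : μ = ν :=
    ext_of_generate_finite _ (pi_measSpace_eq_generateFrom_Iic d) hpiSys hμν huniv
  have h5 : μ (Os i0) = ν (Os i0) := by rw [hμeq]
  rw [hμ, hν, Measure.restrict_apply (hmeas i0), Set.inter_self, Measure.smul_apply,
    Measure.restrict_apply (hmeas i0), Set.inter_eq_left.2 hsub, smul_eq_mul, hvol i0] at h5
  -- h5 : N⁻¹ = N⁻¹ * N⁻¹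
  have h6 : (1 : ℝ≥0∞) = (N : ℝ≥0∞)⁻¹ := by
    calc (1 : ℝ≥0∞) = (N : ℝ≥0∞) * (N : ℝ≥0∞)⁻¹ := (ENNReal.mul_inv_cancel hN0 hNtop).symm
      _ = (N : ℝ≥0∞) * ((N : ℝ≥0∞)⁻¹ * (N : ℝ≥0∞)⁻¹) := by rw [← h5]
      _ = ((N : ℝ≥0∞) * (N : ℝ≥0∞)⁻¹) * (N : ℝ≥0∞)⁻¹ := by ring
      _ = (N : ℝ≥0∞)⁻¹ := by rw [ENNReal.mul_inv_cancel hN0 hNtop, one_mul]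
  have h7 : (N : ℝ≥0∞) = 1 := ENNReal.inv_eq_one.1 h6.symm
  have : N = 1 := by exact_mod_cast h7
  omega

theorem exists_box_with_strict_variance_gain {d N : ℕ} (hN : 2 ≤ N)
    (Os : Fin N → Set (Fin d → ℝ)) (hpart : IsEquivolumePartition Os) :
    ¬ (∀ i : Fin N, ∀ᵐ x ∂(volume.restrict (Set.Icc (0 : Fin d → ℝ) 1)),
        (N : ℝ) * (volume (Os i ∩ Set.Icc 0 x)).toReal
          = (volume (Set.Icc (0 : Fin d → ℝ) x)).toReal) ∧
    ∃ x ∈ Set.Icc (0 : Fin d → ℝ) 1,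
      (volume (Set.Icc (0 : Fin d → ℝ) x)).toReal ^ 2 / (N : ℝ)
        < ∑ i, (volume (Os i ∩ Set.Icc 0 x)).toReal ^ 2 := by
  obtain ⟨hmeas, hdisj, hcover, hvol⟩ := hpart
  have hneg := no_ae_uniform hN Os hmeas hcover hvol
  refine ⟨hneg, ?_⟩
  push_neg at hneg
  obtain ⟨i, hi⟩ := hneg
  rw [frequently_ae_iff, Measure.restrict_apply' measurableSet_Icc] at hi
  obtain ⟨x, hxP, hxbox⟩ := nonempty_of_measure_ne_zero hi
  refine ⟨x, hxbox, ?_⟩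
  have hNpos : 0 < N := by omega
  set a : Fin N → ℝ := fun j => (volume (Os j ∩ Set.Icc 0 x)).toReal with ha
  have hIccsub : Set.Icc 0 x ⊆ Set.Icc (0 : Fin d → ℝ) 1 := Set.Icc_subset_Icc_right hxbox.2
  have hvolfin : ∀ j, volume (Os j ∩ Set.Icc 0 x) ≠ ⊤ := fun j =>
    ((measure_mono Set.inter_subset_left).trans_lt
      (by rw [hvol j]; exact ENNReal.inv_lt_top.2 (by exact_mod_cast hNpos))).ne
  have hunion : Set.Icc (0 : Fin d → ℝ) x = ⋃ j, (Os j ∩ Set.Icc 0 x) := by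
    rw [← Set.iUnion_inter, hcover]
    exact (Set.inter_eq_right.2 hIccsub).symm
  have hsum : volume (Set.Icc (0 : Fin d → ℝ) x) = ∑ j, volume (Os j ∩ Set.Icc 0 x) := by
    conv_lhs => rw [hunion]
    rw [measure_iUnion
      (fun j k hjk => (hdisj hjk).mono Set.inter_subset_left Set.inter_subset_left)
      (fun j => (hmeas j).inter measurableSet_Icc), tsum_fintype]
  have hsumR : (volume (Set.Icc (0 : Fin d → ℝ) x)).toReal = ∑ j, a j := by
    rw [hsum, ENNReal.toReal_sum (fun j _ => hvolfin j)]
  have hne : (N : ℝ) * a i ≠ ∑ j, a j := by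
    rw [← hsumR]
    exact hxP
  have := strict_cs hNpos a i hne
  rw [hsumR]
  exact this
end

section
/- Let Ω ⊆ [0,1]^d be a convex set. Then limsup_{ε → 0+} λ((∂Ω)_ε)/(2ε) ≤ 2d, where (∂Ω)_ε = {x ∈ ℝ^d : dist(x, ∂Ω) ≤ ε} is the closed ε-neighborhood of the topological boundary ∂Ω of Ω, and λ denotes Lebesgue measure on ℝ^d. (In words: the (d−1)-dimensional upper Minkowski content of the boundary of a convex subset of the unit cube is at most the surface area 2d of the cube.) -/
open MeasureTheory Metric Set Filter Function
open scoped ENNReal Topology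

/-- Fubini step: compare volumes via 1-dimensional slices in direction `i`. -/
lemma vol_le_of_slices {d : ℕ} (i : Fin d) {A B : Set (Fin d → ℝ)}
    (hA : MeasurableSet A) (hB : MeasurableSet B)
    (h : ∀ x : Fin d → ℝ, volume {y : ℝ | Function.update x i y ∈ B}
      ≤ volume {y : ℝ | Function.update x i y ∈ A}) :
    volume B ≤ volume A := by
  have hBi : Measurable (B.indicator (fun _ => (1 : ℝ≥0∞))) := measurable_one.indicator hB
  have hAi : Measurable (A.indicator (fun _ => (1 : ℝ≥0∞))) := measurable_one.indicator hA
  rw [← lintegral_indicator_one hB, ← lintegral_indicator_one hA, volume_pi]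
  refine lintegral_le_of_lmarginal_le {i} hBi hAi ?_
  rw [lmarginal_singleton, lmarginal_singleton, Pi.le_def]
  intro x
  have eB : (∫⁻ y : ℝ, B.indicator (fun _ => (1:ℝ≥0∞)) (Function.update x i y))
      = volume {y : ℝ | Function.update x i y ∈ B} :=
    lintegral_indicator_one (hB.preimage (measurable_update x))
  have eA : (∫⁻ y : ℝ, A.indicator (fun _ => (1:ℝ≥0∞)) (Function.update x i y))
      = volume {y : ℝ | Function.update x i y ∈ A} :=
    lintegral_indicator_one (hA.preimage (measurable_update x))
  calc (∫⁻ y : ℝ, B.indicator (fun _ => (1:ℝ≥0∞)) (Function.update x i y)) 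
      = volume {y : ℝ | Function.update x i y ∈ B} := eB
    _ ≤ volume {y : ℝ | Function.update x i y ∈ A} := h x
    _ = _ := eA.symm

/-- A convex subset of `ℝ` contains the open interval between its `sInf` and `sSup`. -/
lemma convex_Ioo_sInf_sSup_subset {s : Set ℝ} (hs : Convex ℝ s) (hne : s.Nonempty)
    (hbdd : BddBelow s) (hBdd : BddAbove s) : Ioo (sInf s) (sSup s) ⊆ s := by
  intro y hy
  obtain ⟨p, hp, hpy⟩ := exists_lt_of_csInf_lt hne hy.1
  obtain ⟨q, hq, hyq⟩ := exists_lt_of_lt_csSup hne hy.2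
  exact hs.ordConnected.out hp hq ⟨hpy.le, hyq.le⟩

lemma ofReal_le_ofReal_sub_add {x c : ℝ} (hc : 0 ≤ c) :
    ENNReal.ofReal x ≤ ENNReal.ofReal (x - c) + ENNReal.ofReal c := by
  rcases le_total x c with h | h
  · calc ENNReal.ofReal x ≤ ENNReal.ofReal c := ENNReal.ofReal_le_ofReal h
    _ ≤ _ := le_add_self
  · rw [← ENNReal.ofReal_add (sub_nonneg.2 h) hc, sub_add_cancel]

/-- 1-D dilation: volume of `s + [-ε, ε]` is at most `volume s + 2ε`. -/
lemma oneDim_dil {s : Set ℝ} (hs : Convex ℝ s) {a b : ℝ} (hsub : s ⊆ Icc a b)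
    {ε : ℝ} (hε : 0 ≤ ε) :
    volume {y : ℝ | ∃ z : ℝ, |z| ≤ ε ∧ y - z ∈ s} ≤ volume s + ENNReal.ofReal (2 * ε) := by
  rcases s.eq_empty_or_nonempty with rfl | hne
  · simp
  have hbdd : BddBelow s := ⟨a, fun x hx => (hsub hx).1⟩
  have hBdd : BddAbove s := ⟨b, fun x hx => (hsub hx).2⟩
  set α := sInf s
  set β := sSup s
  have hαβ : α ≤ β := csInf_le_csSup hne hbdd hBdd
  have h1 : {y : ℝ | ∃ z : ℝ, |z| ≤ ε ∧ y - z ∈ s} ⊆ Icc (α - ε) (β + ε) := by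
    rintro y ⟨z, hz, hyz⟩
    have h1 := csInf_le hbdd hyz
    have h2 := le_csSup hBdd hyz
    have := abs_le.1 hz
    constructor <;> [linarith; linarith]
  have h2 : Ioo α β ⊆ s := convex_Ioo_sInf_sSup_subset hs hne hbdd hBdd
  calc volume {y : ℝ | ∃ z : ℝ, |z| ≤ ε ∧ y - z ∈ s} ≤ volume (Icc (α - ε) (β + ε)) :=
        measure_mono h1
    _ = ENNReal.ofReal ((β - α) + 2 * ε) := by rw [Real.volume_Icc]; ring_nf
    _ = ENNReal.ofReal (β - α) + ENNReal.ofReal (2 * ε) := by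
        rw [ENNReal.ofReal_add (by linarith) (by linarith)]
    _ ≤ volume s + ENNReal.ofReal (2 * ε) := by
        gcongr
        calc ENNReal.ofReal (β - α) = volume (Ioo α β) := by rw [Real.volume_Ioo]
        _ ≤ volume s := measure_mono h2

/-- 1-D erosion: volume of `t` is at most `volume (t ⊖ [-ε,ε]) + 2ε`. -/
lemma oneDim_ero {t : Set ℝ} (ht : Convex ℝ t) {a b : ℝ} (hsub : t ⊆ Icc a b)
    {ε : ℝ} (hε : 0 ≤ ε) :
    volume t ≤ volume {y : ℝ | ∀ z : ℝ, |z| ≤ ε → y + z ∈ t} + ENNReal.ofReal (2 * ε) := by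
  rcases t.eq_empty_or_nonempty with rfl | hne
  · simp
  have hbdd : BddBelow t := ⟨a, fun x hx => (hsub hx).1⟩
  have hBdd : BddAbove t := ⟨b, fun x hx => (hsub hx).2⟩
  set α := sInf t
  set β := sSup t
  have h2 : Ioo α β ⊆ t := convex_Ioo_sInf_sSup_subset ht hne hbdd hBdd
  have h3 : Ioo (α + ε) (β - ε) ⊆ {y : ℝ | ∀ z : ℝ, |z| ≤ ε → y + z ∈ t} := by
    rintro y hy z hz
    have := abs_le.1 hz
    exact h2 ⟨by linarith [hy.1], by linarith [hy.2]⟩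
  have h1 : t ⊆ Icc α β := fun x hx => ⟨csInf_le hbdd hx, le_csSup hBdd hx⟩
  calc volume t ≤ volume (Icc α β) := measure_mono h1
    _ = ENNReal.ofReal (β - α) := by rw [Real.volume_Icc]
    _ ≤ ENNReal.ofReal ((β - α) - 2 * ε) + ENNReal.ofReal (2 * ε) :=
        ofReal_le_ofReal_sub_add (by linarith)
    _ ≤ volume {y : ℝ | ∀ z : ℝ, |z| ≤ ε → y + z ∈ t} + ENNReal.ofReal (2 * ε) := by
        gcongr
        calc ENNReal.ofReal ((β - α) - 2 * ε) = volume (Ioo (α + ε) (β - ε)) := by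
              rw [Real.volume_Ioo]; ring_nf
        _ ≤ _ := measure_mono h3


variable {d : ℕ}

/-- The cube `[a,b]^d` in the pi space. -/
def cubeI (d : ℕ) (a b : ℝ) : Set (Fin d → ℝ) := {x | ∀ j, x j ∈ Icc a b}

/-- Dilation of `C` by `ε`-segments in the directions in `s`. -/
def Oset (C : Set (Fin d → ℝ)) (ε : ℝ) (s : Finset (Fin d)) : Set (Fin d → ℝ) :=
  {x | ∃ c ∈ C, ∃ v : Fin d → ℝ, (∀ j, |v j| ≤ ε) ∧ (∀ j ∉ s, v j = 0) ∧ x = c + v}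

/-- Erosion of `C` by `ε`-segments in the directions in `s`. -/
def Eset (C : Set (Fin d → ℝ)) (ε : ℝ) (s : Finset (Fin d)) : Set (Fin d → ℝ) :=
  {x | ∀ v : Fin d → ℝ, (∀ j, |v j| ≤ ε) → (∀ j ∉ s, v j = 0) → x + v ∈ C}

/-- An auxiliary far-away box. -/
def Rset (d : ℕ) (ε : ℝ) (i : Fin d) : Set (Fin d → ℝ) :=
  {x | x i ∈ Icc (10:ℝ) (10 + 2*ε) ∧ ∀ j, j ≠ i → x j ∈ Icc (-ε) (1+ε)}

lemma Oset_empty {C : Set (Fin d → ℝ)} {ε : ℝ} (hε : 0 ≤ ε) : Oset C ε ∅ = C := by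
  ext x
  constructor
  · rintro ⟨c, hc, v, _, hsupp, rfl⟩
    have : v = 0 := funext fun j => hsupp j (Finset.notMem_empty j)
    simpa [this]
  · intro hx
    exact ⟨x, hx, 0, fun j => by simpa using hε, fun j _ => rfl, by simp⟩

lemma Eset_empty {C : Set (Fin d → ℝ)} {ε : ℝ} (hε : 0 ≤ ε) : Eset C ε ∅ = C := by
  ext x
  constructor
  · intro hx
    have := hx 0 (fun j => by simpa using hε) (fun j _ => rfl)
    simpa using this
  · intro hx v _ hsupp
    have : v = 0 := funext fun j => hsupp j (Finset.notMem_empty j)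
    simpa [this]

lemma subset_Oset {C : Set (Fin d → ℝ)} {ε : ℝ} (hε : 0 ≤ ε) (s : Finset (Fin d)) :
    C ⊆ Oset C ε s :=
  fun x hx => ⟨x, hx, 0, fun j => by simpa using hε, fun j _ => rfl, by simp⟩

lemma Eset_subset {C : Set (Fin d → ℝ)} {ε : ℝ} (hε : 0 ≤ ε) (s : Finset (Fin d)) :
    Eset C ε s ⊆ C := by
  intro x hx
  have := hx 0 (fun j => by simpa using hε) (fun j _ => rfl)
  simpa using this

lemma Oset_convex {C : Set (Fin d → ℝ)} (hC : Convex ℝ C) {ε : ℝ} {s : Finset (Fin d)} :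
    Convex ℝ (Oset C ε s) := by
  rintro x ⟨c₁, hc₁, v₁, hb₁, hs₁, rfl⟩ y ⟨c₂, hc₂, v₂, hb₂, hs₂, rfl⟩ p q hp hq hpq
  refine ⟨p • c₁ + q • c₂, hC hc₁ hc₂ hp hq hpq, p • v₁ + q • v₂, ?_, ?_, by module⟩
  · intro j
    have h1 : |p * v₁ j + q * v₂ j| ≤ p * |v₁ j| + q * |v₂ j| := by
      calc |p * v₁ j + q * v₂ j| ≤ |p * v₁ j| + |q * v₂ j| := abs_add_le _ _
        _ = p * |v₁ j| + q * |v₂ j| := by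
            rw [abs_mul, abs_mul, abs_of_nonneg hp, abs_of_nonneg hq]
    have h2 : p * |v₁ j| + q * |v₂ j| ≤ ε := by
      have hsum : p * ε + q * ε = ε := by rw [← add_mul, hpq, one_mul]
      have := mul_le_mul_of_nonneg_left (hb₁ j) hp
      have := mul_le_mul_of_nonneg_left (hb₂ j) hq
      linarith
    simpa using h1.trans h2
  · intro j hj
    simp [hs₁ j hj, hs₂ j hj]

lemma Eset_convex {C : Set (Fin d → ℝ)} (hC : Convex ℝ C) {ε : ℝ} {s : Finset (Fin d)} :
    Convex ℝ (Eset C ε s) := by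
  intro x hx y hy p q hp hq hpq v hb hsupp
  have h1 := hx v hb hsupp
  have h2 := hy v hb hsupp
  have key : (p • x + q • y) + v = p • (x + v) + q • (y + v) := by
    match_scalars <;> linarith
  rw [key]
  exact hC h1 h2 hp hq hpq

lemma Oset_isCompact {C : Set (Fin d → ℝ)} (hC : IsCompact C) {ε : ℝ} (hε : 0 ≤ ε)
    {s : Finset (Fin d)} : IsCompact (Oset C ε s) := by
  have heq : Oset C ε s = (fun p : (Fin d → ℝ) × (Fin d → ℝ) => p.1 + p.2) ''
      (C ×ˢ Set.pi univ (fun j => if j ∈ s then Icc (-ε) ε else ({0} : Set ℝ))) := by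
    ext x
    constructor
    · rintro ⟨c, hc, v, hb, hsupp, rfl⟩
      refine ⟨(c, v), ⟨hc, ?_⟩, rfl⟩
      intro j _
      by_cases hj : j ∈ s
      · simpa [hj] using abs_le.1 (hb j)
      · simp [hj, hsupp j hj]
    · rintro ⟨⟨c, v⟩, ⟨hc, hv⟩, rfl⟩
      refine ⟨c, hc, v, ?_, ?_, rfl⟩
      · intro j
        have := hv j (mem_univ j)
        by_cases hj : j ∈ s
        · simp only [hj, if_true] at this; exact abs_le.2 this
        · simp only [hj, if_false] at this
          simp only [mem_singleton_iff] at this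
          simpa [this]
      · intro j hj
        have := hv j (mem_univ j)
        simp only [hj, if_false, mem_singleton_iff] at this
        exact this
  rw [heq]
  refine ((hC.prod (isCompact_univ_pi fun j => ?_)).image (continuous_fst.add continuous_snd))
  by_cases hj : j ∈ s
  · simp only [if_pos hj]; exact isCompact_Icc
  · simp only [if_neg hj]; exact isCompact_singleton

lemma Eset_isClosed {C : Set (Fin d → ℝ)} (hC : IsClosed C) {ε : ℝ} {s : Finset (Fin d)} :
    IsClosed (Eset C ε s) := by
  have heq : Eset C ε s = ⋂ (v : Fin d → ℝ),
      ⋂ (_ : (∀ j, |v j| ≤ ε) ∧ (∀ j ∉ s, v j = 0)), (fun x => x + v) ⁻¹' C := by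
    ext x
    simp only [Eset, mem_setOf_eq, mem_iInter, mem_preimage]
    constructor
    · intro h v hv; exact h v hv.1 hv.2
    · intro h v h1 h2; exact h v ⟨h1, h2⟩
  rw [heq]
  exact isClosed_iInter fun v => isClosed_iInter fun _ =>
    hC.preimage (continuous_id.add continuous_const)

lemma Oset_subset_cube {C : Set (Fin d → ℝ)} (hC : C ⊆ cubeI d 0 1) {ε : ℝ}
    {s : Finset (Fin d)} : Oset C ε s ⊆ cubeI d (-ε) (1+ε) := by
  rintro x ⟨c, hc, v, hb, _, rfl⟩ j
  have h1 := (hC hc) j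
  have h2 := abs_le.1 (hb j)
  exact ⟨by simpa using by linarith [h1.1, h2.1], by simpa using by linarith [h1.2, h2.2]⟩

lemma slice_convex {A : Set (Fin d → ℝ)} (hA : Convex ℝ A) (x : Fin d → ℝ) (i : Fin d) :
    Convex ℝ {y : ℝ | Function.update x i y ∈ A} := by
  intro y₁ h₁ y₂ h₂ p q hp hq hpq
  have key : Function.update x i (p • y₁ + q • y₂)
      = p • Function.update x i y₁ + q • Function.update x i y₂ := by
    funext j
    by_cases hj : j = i
    · subst hj; simp
    · simp only [Function.update_of_ne hj, Pi.add_apply, Pi.smul_apply, smul_eq_mul]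
      rw [← add_mul, hpq, one_mul]
  show Function.update x i (p • y₁ + q • y₂) ∈ A
  rw [key]
  exact hA h₁ h₂ hp hq hpq

lemma slice_subset_Icc {A : Set (Fin d → ℝ)} {a b : ℝ} (hA : A ⊆ cubeI d a b)
    (x : Fin d → ℝ) (i : Fin d) : {y : ℝ | Function.update x i y ∈ A} ⊆ Icc a b := by
  intro y hy
  have := (hA hy) i
  rwa [Function.update_self] at this

lemma slice_Oset_insert (C : Set (Fin d → ℝ)) (ε : ℝ) (hε : 0 ≤ ε) {s : Finset (Fin d)}
    {i : Fin d} (hi : i ∉ s) (x : Fin d → ℝ) :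
    {y : ℝ | Function.update x i y ∈ Oset C ε (insert i s)} =
    {y : ℝ | ∃ z : ℝ, |z| ≤ ε ∧ y - z ∈ {y' : ℝ | Function.update x i y' ∈ Oset C ε s}} := by
  ext y
  simp only [mem_setOf_eq]
  constructor
  · rintro ⟨c, hc, v, hb, hsupp, heq⟩
    refine ⟨v i, hb i, c, hc, Function.update v i 0, ?_, ?_, ?_⟩
    · intro j
      by_cases hj : j = i
      · rw [hj, Function.update_self]; simpa using hε
      · simpa [Function.update_of_ne hj] using hb j
    · intro j hj
      by_cases hj' : j = i
      · rw [hj', Function.update_self]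
      · have : j ∉ insert i s := by simp [hj', hj]
        simp [Function.update_of_ne hj', hsupp j this]
    · funext j
      by_cases hj : j = i
      · have hyv := congrFun heq i
        simp only [Function.update_self, Pi.add_apply] at hyv
        rw [hj]
        simp only [Function.update_self, Pi.add_apply, Function.update_self]
        rw [hyv]; ring
      · have hxj := congrFun heq j
        simp only [Function.update_of_ne hj, Pi.add_apply] at hxj
        simp only [Function.update_of_ne hj, Pi.add_apply, hxj]
  · rintro ⟨z, hz, c, hc, v', hb', hsupp', heq'⟩
    refine ⟨c, hc, Function.update v' i z, ?_, ?_, ?_⟩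
    · intro j
      by_cases hj : j = i
      · rw [hj, Function.update_self]; exact hz
      · simpa [Function.update_of_ne hj] using hb' j
    · intro j hj
      have hj' : j ≠ i := fun h => hj (h ▸ Finset.mem_insert_self i s)
      have hjs : j ∉ s := fun h => hj (Finset.mem_insert_of_mem h)
      simp [Function.update_of_ne hj', hsupp' j hjs]
    · funext j
      by_cases hj : j = i
      · have hv'i : v' i = 0 := hsupp' i hi
        have hyz := congrFun heq' i
        simp only [Function.update_self, Pi.add_apply, hv'i, add_zero] at hyz
        rw [hj]
        simp only [Function.update_self, Pi.add_apply, Function.update_self]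
        linarith
      · have hxj := congrFun heq' j
        simp only [Function.update_of_ne hj, Pi.add_apply] at hxj
        simp only [Function.update_of_ne hj, Pi.add_apply, hxj]

lemma slice_Eset_insert (C : Set (Fin d → ℝ)) (ε : ℝ) {s : Finset (Fin d)}
    {i : Fin d} (hi : i ∉ s) (x : Fin d → ℝ) :
    {y : ℝ | Function.update x i y ∈ Eset C ε (insert i s)} =
    {y : ℝ | ∀ z : ℝ, |z| ≤ ε → y + z ∈ {y' : ℝ | Function.update x i y' ∈ Eset C ε s}} := by
  ext y
  simp only [mem_setOf_eq]
  constructor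
  · intro h z hz v' hb' hsupp'
    have hkey : Function.update x i (y + z) + v'
        = Function.update x i y + Function.update v' i z := by
      funext j
      by_cases hj : j = i
      · rw [hj]
        simp only [Pi.add_apply, Function.update_self, hsupp' i hi, add_zero, Function.update_self]
      · simp [Function.update_of_ne hj]
    rw [hkey]
    refine h (Function.update v' i z) ?_ ?_
    · intro j
      by_cases hj : j = i
      · rw [hj, Function.update_self]; exact hz
      · simpa [Function.update_of_ne hj] using hb' j
    · intro j hj
      have hj' : j ≠ i := fun h' => hj (h' ▸ Finset.mem_insert_self i s)
      have hjs : j ∉ s := fun h' => hj (Finset.mem_insert_of_mem h')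
      simp [Function.update_of_ne hj', hsupp' j hjs]
  · intro h v hb hsupp
    have h1 := h (v i) (hb i) (Function.update v i 0) ?_ ?_
    · have hkey : Function.update x i (y + v i) + Function.update v i 0
          = Function.update x i y + v := by
        funext j
        by_cases hj : j = i
        · rw [hj]
          simp only [Pi.add_apply, Function.update_self, add_zero, Function.update_self]
        · simp [Function.update_of_ne hj]
      rwa [hkey] at h1
    · intro j
      by_cases hj : j = i
      · rw [hj, Function.update_self]
        simpa using (abs_nonneg (v i)).trans (hb i)
      · simpa [Function.update_of_ne hj] using hb j
    · intro j hj
      by_cases hj' : j = i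
      · rw [hj', Function.update_self]
      · have : j ∉ insert i s := by simp [hj', hj]
        simp [Function.update_of_ne hj', hsupp j this]

lemma Rset_eq_pi {ε : ℝ} {i : Fin d} :
    Rset d ε i = Set.pi univ
      (fun j => if j = i then Icc (10:ℝ) (10 + 2*ε) else Icc (-ε) (1+ε)) := by
  ext x
  simp only [Rset, mem_setOf_eq, Set.mem_pi, mem_univ, forall_true_left, true_implies]
  constructor
  · rintro ⟨h1, h2⟩ j
    by_cases hj : j = i
    · rw [if_pos hj, hj]; exact h1
    · rw [if_neg hj]; exact h2 j hj
  · intro h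
    refine ⟨by simpa using h i, fun j hj => by simpa [hj] using h j⟩

lemma Rset_measurable {ε : ℝ} {i : Fin d} : MeasurableSet (Rset d ε i) := by
  rw [Rset_eq_pi]
  exact MeasurableSet.univ_pi fun j => by split_ifs <;> exact measurableSet_Icc

lemma Rset_volume {ε : ℝ} (hε : 0 ≤ ε) (i : Fin d) :
    volume (Rset d ε i) = ENNReal.ofReal (2*ε) * ENNReal.ofReal (1+2*ε) ^ (d-1) := by
  rw [Rset_eq_pi, volume_pi_pi]
  have key : ∀ j : Fin d, volume (if j = i then Icc (10:ℝ) (10 + 2*ε) else Icc (-ε) (1+ε))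
      = if j = i then ENNReal.ofReal (2*ε) else ENNReal.ofReal (1+2*ε) := by
    intro j
    split_ifs <;> rw [Real.volume_Icc] <;> congr 1 <;> ring
  rw [Finset.prod_congr rfl (fun j _ => key j),
    ← Finset.mul_prod_erase Finset.univ _ (Finset.mem_univ i), if_pos rfl]
  congr 1
  rw [Finset.prod_congr rfl (fun j hj => if_neg (Finset.ne_of_mem_erase hj)),
    Finset.prod_const, Finset.card_erase_of_mem (Finset.mem_univ i), Finset.card_univ,
    Fintype.card_fin]

lemma Oset_chain {C : Set (Fin d → ℝ)} (hC : Convex ℝ C) (hCc : IsCompact C)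
    (hCs : C ⊆ cubeI d 0 1) {ε : ℝ} (hε : 0 < ε) (hε2 : ε ≤ 2) (s : Finset (Fin d)) :
    volume (Oset C ε s) ≤ volume C
      + s.card • (ENNReal.ofReal (2*ε) * ENNReal.ofReal (1+2*ε) ^ (d-1)) := by
  induction s using Finset.induction_on with
  | empty => simp [Oset_empty hε.le]
  | @insert i s hi ih =>
    have hstep : volume (Oset C ε (insert i s)) ≤ volume (Oset C ε s ∪ Rset d ε i) := by
      apply vol_le_of_slices i
        (((Oset_isCompact hCc hε.le).measurableSet).union Rset_measurable)
        ((Oset_isCompact hCc hε.le).measurableSet)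
      intro x
      rcases eq_empty_or_nonempty {y : ℝ | Function.update x i y ∈ Oset C ε s} with hemp | hne
      · have : {y : ℝ | Function.update x i y ∈ Oset C ε (insert i s)} = ∅ := by
          rw [slice_Oset_insert C ε hε.le hi x, eq_empty_iff_forall_notMem]
          rintro y ⟨z, hz, hmem⟩
          rw [hemp] at hmem
          exact notMem_empty _ hmem
        rw [this]
        simp
      · obtain ⟨y₀, hy₀⟩ := hne
        have hxj : ∀ j, j ≠ i → x j ∈ Icc (-ε) (1+ε) := by
          intro j hj
          have h1 := (Oset_subset_cube hCs hy₀) j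
          rwa [Function.update_of_ne hj] at h1
        have hsliceR : {y : ℝ | Function.update x i y ∈ Rset d ε i} = Icc (10:ℝ) (10+2*ε) := by
          ext y
          simp only [Rset, mem_setOf_eq, Function.update_self]
          constructor
          · exact fun h => h.1
          · intro h
            exact ⟨h, fun j hj => by rw [Function.update_of_ne hj]; exact hxj j hj⟩
        have hsliceU : {y : ℝ | Function.update x i y ∈ Oset C ε s ∪ Rset d ε i}
            = {y : ℝ | Function.update x i y ∈ Oset C ε s} ∪ Icc (10:ℝ) (10+2*ε) := by
          rw [← hsliceR]; rfl
        have hsliceO : {y : ℝ | Function.update x i y ∈ Oset C ε s} ⊆ Icc (-ε) (1+ε) :=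
          slice_subset_Icc (Oset_subset_cube hCs) x i
        have hdisj : Disjoint {y : ℝ | Function.update x i y ∈ Oset C ε s}
            (Icc (10:ℝ) (10+2*ε)) := by
          rw [Set.disjoint_left]
          intro y hy hy'
          have h1 := (hsliceO hy).2
          have h2 := hy'.1
          linarith
        rw [hsliceU, measure_union hdisj measurableSet_Icc, Real.volume_Icc,
          slice_Oset_insert C ε hε.le hi x]
        have := oneDim_dil (slice_convex (Oset_convex hC) x i) hsliceO hε.le
        calc volume {y : ℝ | ∃ z, |z| ≤ ε ∧
              y - z ∈ {y' : ℝ | Function.update x i y' ∈ Oset C ε s}}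
            ≤ volume {y' : ℝ | Function.update x i y' ∈ Oset C ε s}
              + ENNReal.ofReal (2*ε) := this
          _ = _ := by congr 1; congr 1; ring
    calc volume (Oset C ε (insert i s)) ≤ volume (Oset C ε s ∪ Rset d ε i) := hstep
      _ ≤ volume (Oset C ε s) + volume (Rset d ε i) := measure_union_le _ _
      _ ≤ (volume C + s.card • (ENNReal.ofReal (2*ε) * ENNReal.ofReal (1+2*ε) ^ (d-1)))
          + (ENNReal.ofReal (2*ε) * ENNReal.ofReal (1+2*ε) ^ (d-1)) := by
            gcongr
            rw [Rset_volume hε.le i]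
      _ = volume C + (insert i s).card
            • (ENNReal.ofReal (2*ε) * ENNReal.ofReal (1+2*ε) ^ (d-1)) := by
          rw [Finset.card_insert_of_notMem hi, succ_nsmul, add_assoc]

lemma Eset_chain {C : Set (Fin d → ℝ)} (hC : Convex ℝ C) (hCcl : IsClosed C)
    (hCc : IsCompact C) (hCs : C ⊆ cubeI d 0 1) {ε : ℝ} (hε : 0 < ε) (s : Finset (Fin d)) :
    volume C ≤ volume (Eset C ε s)
      + s.card • (ENNReal.ofReal (2*ε) * ENNReal.ofReal (1+2*ε) ^ (d-1)) := by
  induction s using Finset.induction_on with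
  | empty => simp [Eset_empty hε.le]
  | @insert i s hi ih =>
    have hstep : volume (Eset C ε s) ≤ volume (Eset C ε (insert i s) ∪ Rset d ε i) := by
      apply vol_le_of_slices i
        (((Eset_isClosed hCcl).measurableSet).union Rset_measurable)
        ((Eset_isClosed hCcl).measurableSet)
      intro x
      rcases eq_empty_or_nonempty {y : ℝ | Function.update x i y ∈ Eset C ε s} with hemp | hne
      · rw [hemp]
        simp
      · obtain ⟨y₀, hy₀⟩ := hne
        have hy₀C : Function.update x i y₀ ∈ C := Eset_subset hε.le s hy₀
        have hxj : ∀ j, j ≠ i → x j ∈ Icc (-ε) (1+ε) := by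
          intro j hj
          have h1 := (hCs hy₀C) j
          rw [Function.update_of_ne hj] at h1
          exact ⟨by linarith [h1.1], by linarith [h1.2]⟩
        have hsliceR : {y : ℝ | Function.update x i y ∈ Rset d ε i} = Icc (10:ℝ) (10+2*ε) := by
          ext y
          simp only [Rset, mem_setOf_eq, Function.update_self]
          constructor
          · exact fun h => h.1
          · intro h
            exact ⟨h, fun j hj => by rw [Function.update_of_ne hj]; exact hxj j hj⟩
        have hsliceU : {y : ℝ | Function.update x i y ∈ Eset C ε (insert i s) ∪ Rset d ε i}
            = {y : ℝ | Function.update x i y ∈ Eset C ε (insert i s)}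
              ∪ Icc (10:ℝ) (10+2*ε) := by
          rw [← hsliceR]; rfl
        have hsliceE : {y : ℝ | Function.update x i y ∈ Eset C ε s} ⊆ Icc 0 1 := by
          intro y hy
          have := (hCs (Eset_subset hε.le s hy)) i
          rwa [Function.update_self] at this
        have hsliceE' : {y : ℝ | Function.update x i y ∈ Eset C ε (insert i s)} ⊆ Icc 0 1 := by
          intro y hy
          have := (hCs (Eset_subset hε.le (insert i s) hy)) i
          rwa [Function.update_self] at this
        have hdisj : Disjoint {y : ℝ | Function.update x i y ∈ Eset C ε (insert i s)}
            (Icc (10:ℝ) (10+2*ε)) := by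
          rw [Set.disjoint_left]
          intro y hy hy'
          have h1 := (hsliceE' hy).2
          have h2 := hy'.1
          linarith
        rw [hsliceU, measure_union hdisj measurableSet_Icc, Real.volume_Icc]
        have := oneDim_ero (slice_convex (Eset_convex hC) x i) hsliceE hε.le
        calc volume {y : ℝ | Function.update x i y ∈ Eset C ε s}
            ≤ volume {y : ℝ | ∀ z : ℝ, |z| ≤ ε →
                y + z ∈ {y' : ℝ | Function.update x i y' ∈ Eset C ε s}}
              + ENNReal.ofReal (2*ε) := this
          _ = _ := by
              rw [← slice_Eset_insert C ε hi x]
              congr 1; congr 1; ring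
    have hEfin : volume (Eset C ε s) ≠ ⊤ := by
      refine ne_of_lt (lt_of_le_of_lt (measure_mono (Eset_subset hε.le s)) ?_)
      exact hCc.measure_lt_top
    calc volume C ≤ volume (Eset C ε s)
          + s.card • (ENNReal.ofReal (2*ε) * ENNReal.ofReal (1+2*ε) ^ (d-1)) := ih
      _ ≤ (volume (Eset C ε (insert i s)) + volume (Rset d ε i))
          + s.card • (ENNReal.ofReal (2*ε) * ENNReal.ofReal (1+2*ε) ^ (d-1)) := by
            gcongr
            exact hstep.trans (measure_union_le _ _)
      _ = volume (Eset C ε (insert i s)) + (insert i s).card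
            • (ENNReal.ofReal (2*ε) * ENNReal.ofReal (1+2*ε) ^ (d-1)) := by
          rw [Rset_volume hε.le i, Finset.card_insert_of_notMem hi, succ_nsmul, add_assoc,
            add_comm (ENNReal.ofReal (2*ε) * ENNReal.ofReal (1+2*ε) ^ (d-1))
              (s.card • (ENNReal.ofReal (2*ε) * ENNReal.ofReal (1+2*ε) ^ (d-1)))]

/-- The closed unit cube `[0,1]^d` in Euclidean space. -/
def unitCube (d : ℕ) : Set (EuclideanSpace ℝ (Fin d)) :=
  {x | ∀ j, x j ∈ Set.Icc (0 : ℝ) 1}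

/-- For a convex set in a finite-dimensional space, the interior of the closure is contained
in the interior. -/
lemma convex_interior_closure_subset {d : ℕ} {S : Set (EuclideanSpace ℝ (Fin d))}
    (hS : Convex ℝ S) : interior (closure S) ⊆ interior S := by
  rcases (interior S).eq_empty_or_nonempty with hint | ⟨y, hy⟩
  · intro x hx
    exfalso
    have h1 : (interior (closure S)).Nonempty := ⟨x, hx⟩
    have h2 := (hS.closure.interior_nonempty_iff_affineSpan_eq_top).1 h1
    have h3 : closure S ⊆ (affineSpan ℝ S : Set (EuclideanSpace ℝ (Fin d))) :=
      closure_minimal (subset_affineSpan ℝ S) (affineSpan ℝ S).closed_of_finiteDimensional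
    have h4 : affineSpan ℝ (closure S) ≤ affineSpan ℝ S := affineSpan_le.2 h3
    have h5 : affineSpan ℝ S = ⊤ := top_le_iff.1 (h2 ▸ h4)
    have h6 := (hS.interior_nonempty_iff_affineSpan_eq_top).2 h5
    rw [hint] at h6
    exact Set.not_nonempty_empty h6
  · intro x hx
    by_cases hxy : x = y
    · rw [hxy]; exact hy
    obtain ⟨δ, hδ0, hball⟩ := Metric.isOpen_iff.1 isOpen_interior x hx
    have hxy' : (0:ℝ) < ‖x - y‖ := by
      rw [norm_pos_iff, sub_ne_zero]
      exact hxy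
    set t : ℝ := δ / (2 * ‖x - y‖) with ht
    have ht0 : 0 < t := div_pos hδ0 (by positivity)
    set z := x + t • (x - y) with hz
    have hzmem : z ∈ closure S := by
      have : z ∈ Metric.ball x δ := by
        rw [Metric.mem_ball, dist_eq_norm]
        have : z - x = t • (x - y) := by rw [hz]; abel
        rw [this, norm_smul, Real.norm_eq_abs, abs_of_pos ht0, ht]
        rw [div_mul_eq_mul_div, mul_comm]
        rw [mul_comm (2:ℝ) ‖x - y‖, ← div_div]
        calc ‖x - y‖ * δ / ‖x - y‖ / 2 = δ / 2 := by
              rw [mul_comm, mul_div_assoc, div_self (ne_of_gt hxy'), mul_one]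
          _ < δ := by linarith
      exact interior_subset (hball this)
    have h1t : (0:ℝ) < 1 + t := by linarith
    have hcombo : (t/(1+t)) • y + (1/(1+t)) • z = x := by
      rw [hz]
      match_scalars <;> field_simp <;> ring
    have := hS.combo_interior_closure_mem_interior hy hzmem
      (div_pos ht0 h1t) (le_of_lt (div_pos one_pos h1t))
      (by field_simp; ring)
    rwa [hcombo] at this

lemma coord_abs_le_norm {d : ℕ} (w : EuclideanSpace ℝ (Fin d)) (j : Fin d) :
    |w j| ≤ ‖w‖ := by
  rw [EuclideanSpace.norm_eq]
  have h1 : |w j| = Real.sqrt (‖w j‖^2) := by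
    rw [Real.sqrt_sq_eq_abs, Real.norm_eq_abs, abs_abs]
  rw [h1]
  apply Real.sqrt_le_sqrt
  exact Finset.single_le_sum (fun k _ => sq_nonneg ‖w k‖) (Finset.mem_univ j)

/-- Main volume estimate. -/
lemma main_bound {d : ℕ} (S : Set (EuclideanSpace ℝ (Fin d))) (hSsub : S ⊆ unitCube d)
    (hSconv : Convex ℝ S) {ε ε' : ℝ} (h0 : 0 < ε) (hlt : ε < ε') (hε'2 : ε' ≤ 2) :
    volume (cthickening ε (frontier S)) ≤
      d • (ENNReal.ofReal (2*ε') * ENNReal.ofReal (1+2*ε') ^ (d-1))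
      + d • (ENNReal.ofReal (2*ε') * ENNReal.ofReal (1+2*ε') ^ (d-1)) := by
  have hε'0 : 0 < ε' := h0.trans hlt
  set L := EuclideanSpace.equiv (Fin d) ℝ with hLdef
  have hLapp : ∀ (x : EuclideanSpace ℝ (Fin d)) (j : Fin d), L x j = x j := fun x j => rfl
  set C := closure S with hCdef
  have hCconv : Convex ℝ C := hSconv.closure
  have hCcl : IsClosed C := isClosed_closure
  have hcoordcont : ∀ j : Fin d, Continuous (fun x : EuclideanSpace ℝ (Fin d) => x j) := by
    intro j
    have : (fun x : EuclideanSpace ℝ (Fin d) => x j) = (fun x => (L x) j) := by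
      funext x; rw [hLapp]
    rw [this]
    exact (continuous_apply j).comp L.continuous
  have hcubecl : IsClosed (unitCube d) := by
    have : unitCube d = ⋂ j, (fun x : EuclideanSpace ℝ (Fin d) => x j) ⁻¹' Icc 0 1 := by
      ext x; simp [unitCube, mem_iInter]
    rw [this]
    exact isClosed_iInter fun j => isClosed_Icc.preimage (hcoordcont j)
  have hCsub : C ⊆ unitCube d := closure_minimal hSsub hcubecl
  have hCbdd : Bornology.IsBounded C := by
    have hcube_b : unitCube d ⊆ Metric.closedBall 0 (Real.sqrt d) := by
      intro x hx
      rw [Metric.mem_closedBall, dist_zero_right, EuclideanSpace.norm_eq]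
      apply Real.sqrt_le_sqrt
      calc ∑ j, ‖x j‖^2 ≤ ∑ _j : Fin d, 1 := by
            apply Finset.sum_le_sum
            intro j _
            have := hx j
            rw [Real.norm_eq_abs, abs_of_nonneg this.1]
            nlinarith [this.1, this.2]
        _ = (d : ℝ) := by simp
    exact Metric.isBounded_closedBall.subset (hCsub.trans hcube_b)
  have hCc : IsCompact C := isCompact_of_isClosed_isBounded hCcl hCbdd
  set CY := ⇑L '' C with hCYdef
  have hCYconv : Convex ℝ CY := by
    have := hCconv.linear_image (L.toLinearEquiv.toLinearMap)
    exact this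
  have hCYc : IsCompact CY := hCc.image L.continuous
  have hCYcl : IsClosed CY := hCYc.isClosed
  have hCYsub : CY ⊆ cubeI d 0 1 := by
    rintro _ ⟨x, hx, rfl⟩ j
    rw [hLapp]
    exact hCsub hx j
  set X := ENNReal.ofReal (2*ε') * ENNReal.ofReal (1+2*ε') ^ (d-1) with hXdef
  have hcard : (Finset.univ : Finset (Fin d)).card = d := by
    rw [Finset.card_univ, Fintype.card_fin]
  have hOchain : volume (Oset CY ε' Finset.univ) ≤ volume CY + d • X := by
    have := Oset_chain hCYconv hCYc hCYsub hε'0 hε'2 Finset.univ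
    rwa [hcard] at this
  have hEchain : volume CY ≤ volume (Eset CY ε' Finset.univ) + d • X := by
    have := Eset_chain hCYconv hCYcl hCYc hCYsub hε'0 Finset.univ
    rwa [hcard] at this
  -- the inclusion
  have hincl : cthickening ε (frontier S) ⊆
      ⇑L ⁻¹' ((Oset CY ε' Finset.univ \ CY) ∪ (CY \ Eset CY ε' Finset.univ)) := by
    intro x hx
    have hx1 : EMetric.infEdist x (frontier S) ≤ ENNReal.ofReal ε :=
      mem_cthickening_iff.1 hx
    have hx2 : EMetric.infEdist x (frontier S) < ENNReal.ofReal ε' :=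
      lt_of_le_of_lt hx1 (by rwa [ENNReal.ofReal_lt_ofReal_iff hε'0])
    obtain ⟨b, hbfr, hxb⟩ := EMetric.infEdist_lt_iff.mp hx2
    have hdistb : dist x b < ε' := edist_lt_ofReal.1 hxb
    by_cases hxC : x ∈ C
    · refine mem_preimage.2 (Or.inr ⟨⟨x, hxC, rfl⟩, ?_⟩)
      intro hE
      -- from membership in the eroded set, a ball around x is inside C
      have hball : ∀ w : EuclideanSpace ℝ (Fin d), (∀ j, |w j| ≤ ε') → x + w ∈ C := by
        intro w hw
        have h1 := hE (⇑L w) (fun j => by rw [hLapp]; exact hw j)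
          (fun j hj => absurd (Finset.mem_univ j) hj)
        obtain ⟨c, hc, hc2⟩ := h1
        have : ⇑L (x + w) = ⇑L c := by
          rw [map_add]; exact hc2.symm
        have := L.injective this
        rwa [this]
      -- b is in the interior of C
      have hbi : b ∈ interior C := by
        have hδ : 0 < ε' - dist x b := by linarith
        refine mem_interior.2 ⟨Metric.ball b (ε' - dist x b), ?_, Metric.isOpen_ball,
          Metric.mem_ball_self hδ⟩
        intro u hu
        have : u = x + (u - x) := by abel
        rw [this]
        apply hball
        intro j
        have hcalc : |(u - x) j| < ε' :=
          calc |(u - x) j| ≤ ‖u - x‖ := coord_abs_le_norm _ j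
            _ ≤ ‖u - b‖ + ‖b - x‖ := norm_sub_le_norm_sub_add_norm_sub u b x
            _ < (ε' - dist x b) + dist x b := by
                apply add_lt_add_of_lt_of_le
                · rw [← dist_eq_norm]; exact hu
                · rw [← dist_eq_norm, dist_comm]
            _ = ε' := by ring
        exact hcalc.le
      have hbiS : b ∈ interior S := convex_interior_closure_subset hSconv hbi
      exact hbfr.2 hbiS
    · refine mem_preimage.2 (Or.inl ⟨?_, ?_⟩)
      · refine ⟨⇑L b, ⟨b, frontier_subset_closure hbfr, rfl⟩,
          fun j => x j - b j, ?_, fun j hj => absurd (Finset.mem_univ j) hj, ?_⟩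
        · intro j
          calc |x j - b j| ≤ ‖x - b‖ := by
                have := coord_abs_le_norm (x - b) j
                simpa using this
            _ ≤ ε' := by rw [← dist_eq_norm]; exact hdistb.le
        · funext j
          simp [hLapp]
      · intro hmem
        obtain ⟨c, hc, hc2⟩ := hmem
        exact hxC (L.injective hc2 ▸ hc)
  -- measure computations
  have hOmeas : MeasurableSet (Oset CY ε' Finset.univ) :=
    (Oset_isCompact hCYc hε'0.le).measurableSet
  have hCYmeas : MeasurableSet CY := hCYc.measurableSet
  have hEmeas : MeasurableSet (Eset CY ε' Finset.univ) :=
    (Eset_isClosed hCYcl).measurableSet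
  have hCYfin : volume CY ≠ ⊤ := hCYc.measure_lt_top.ne
  have hEfin : volume (Eset CY ε' Finset.univ) ≠ ⊤ :=
    (lt_of_le_of_lt (measure_mono (Eset_subset hε'0.le Finset.univ)) hCYc.measure_lt_top).ne
  have hTmeas : MeasurableSet ((Oset CY ε' Finset.univ \ CY) ∪ (CY \ Eset CY ε' Finset.univ)) :=
    (hOmeas.diff hCYmeas).union (hCYmeas.diff hEmeas)
  have hcoe : ⇑(MeasurableEquiv.toLp 2 (Fin d → ℝ)).symm = ⇑L := by
    funext x
    rfl
  calc volume (cthickening ε (frontier S))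
      ≤ volume (⇑L ⁻¹' ((Oset CY ε' Finset.univ \ CY) ∪ (CY \ Eset CY ε' Finset.univ))) :=
        measure_mono hincl
    _ = volume ((Oset CY ε' Finset.univ \ CY) ∪ (CY \ Eset CY ε' Finset.univ)) := by
        rw [← hcoe]
        exact (EuclideanSpace.volume_preserving_symm_measurableEquiv_toLp (Fin d)).measure_preimage
          hTmeas.nullMeasurableSet
    _ ≤ volume (Oset CY ε' Finset.univ \ CY) + volume (CY \ Eset CY ε' Finset.univ) :=
        measure_union_le _ _
    _ ≤ d • X + d • X := by
        gcongr
        · rw [measure_diff (subset_Oset hε'0.le Finset.univ) hCYmeas.nullMeasurableSet hCYfin]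
          rw [tsub_le_iff_right, add_comm]
          exact hOchain
        · rw [measure_diff (Eset_subset hε'0.le Finset.univ) hEmeas.nullMeasurableSet hEfin]
          rw [tsub_le_iff_right, add_comm]
          exact hEchain
/-- The upper Minkowski content of the boundary of a convex subset of the unit cube is
at most `2d`, the surface area of the cube. -/
theorem upper_minkowski_content_boundary_convex_le {d : ℕ}
    (S : Set (EuclideanSpace ℝ (Fin d))) (hSsub : S ⊆ unitCube d) (hSconv : Convex ℝ S) :
    Filter.limsup
        (fun ε : ℝ => (volume (Metric.cthickening ε (frontier S))).toReal / (2 * ε))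
        (𝓝[>] (0:ℝ)) ≤ 2 * d := by
  set F : ℝ → ℝ :=
    fun ε : ℝ => (volume (Metric.cthickening ε (frontier S))).toReal / (2 * ε) with hF
  have key : ∀ θ : ℝ, 0 < θ → θ ≤ 1 →
      Filter.limsup F (𝓝[>] (0:ℝ)) ≤ 2*d*(1+θ) := by
    intro θ hθ0 hθ1
    set g : ℝ → ℝ := fun ε => 2*d*(1+θ)*(1+2*((1+θ)*ε))^(d-1) with hg
    have hFg : F ≤ᶠ[𝓝[>] (0:ℝ)] g := by
      filter_upwards [Ioc_mem_nhdsGT zero_lt_one] with ε hε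
      have h0 : 0 < ε := hε.1
      have h1 : ε < (1+θ)*ε := by nlinarith
      have h2 : (1+θ)*ε ≤ 2 := by nlinarith [hε.2]
      have hvol := main_bound S hSsub hSconv h0 h1 h2
      set X := ENNReal.ofReal (2*((1+θ)*ε)) * ENNReal.ofReal (1+2*((1+θ)*ε)) ^ (d-1) with hX
      have hXfin : X ≠ ⊤ :=
        ENNReal.mul_ne_top ENNReal.ofReal_ne_top (ENNReal.pow_ne_top ENNReal.ofReal_ne_top)
      have hsmulfin : d • X ≠ ⊤ := by
        rw [nsmul_eq_mul]
        exact ENNReal.mul_ne_top (ENNReal.natCast_ne_top d) hXfin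
      have hfin : d • X + d • X ≠ ⊤ := ENNReal.add_ne_top.2 ⟨hsmulfin, hsmulfin⟩
      have htor := ENNReal.toReal_mono hfin hvol
      have hsmul_toReal : (d • X).toReal
          = d * ((2*((1+θ)*ε)) * (1+2*((1+θ)*ε))^(d-1)) := by
        rw [nsmul_eq_mul, ENNReal.toReal_mul, ENNReal.toReal_natCast, hX,
          ENNReal.toReal_mul, ENNReal.toReal_pow, ENNReal.toReal_ofReal (by positivity),
          ENNReal.toReal_ofReal (by positivity)]
      have hsum_toReal : (d • X + d • X).toReal
          = 2 * (d * ((2*((1+θ)*ε)) * (1+2*((1+θ)*ε))^(d-1))) := by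
        rw [ENNReal.toReal_add hsmulfin hsmulfin, hsmul_toReal]
        ring
      calc F ε ≤ (d • X + d • X).toReal / (2*ε) := by
            exact (div_le_div_iff_of_pos_right (by linarith)).2 htor
        _ = g ε := by
            rw [hsum_toReal, hg]
            field_simp
    have hcont : Continuous g := by
      rw [hg]
      exact continuous_const.mul
        ((continuous_const.add (continuous_const.mul (continuous_const.mul continuous_id))).pow _)
    have htend : Tendsto g (𝓝[>] (0:ℝ)) (𝓝 (2*d*(1+θ))) := by
      have h1 : Tendsto g (𝓝 (0:ℝ)) (𝓝 (g 0)) := hcont.tendsto 0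
      have h2 : g 0 = 2*d*(1+θ) := by simp [hg]
      rw [h2] at h1
      exact h1.mono_left nhdsWithin_le_nhds
    have hcob : IsCoboundedUnder (· ≤ ·) (𝓝[>] (0:ℝ)) F := by
      apply isCoboundedUnder_le_of_eventually_le (𝓝[>] (0:ℝ)) (x := 0)
      filter_upwards [self_mem_nhdsWithin] with ε hε
      have : (0:ℝ) < ε := hε
      exact div_nonneg ENNReal.toReal_nonneg (by linarith)
    calc limsup F (𝓝[>] (0:ℝ)) ≤ limsup g (𝓝[>] (0:ℝ)) :=
          limsup_le_limsup hFg hcob htend.isBoundedUnder_le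
      _ = 2*d*(1+θ) := htend.limsup_eq
  by_contra hcon
  push_neg at hcon
  set Lv := limsup F (𝓝[>] (0:ℝ)) with hLv
  have hd1 : (0:ℝ) < 2*d+1 := by positivity
  have hLd : 0 < Lv - 2*d := by linarith
  set θ := min 1 ((Lv - 2*d)/(2*d+1)) with hθ
  have hθ0 : 0 < θ := lt_min one_pos (div_pos hLd hd1)
  have hθ1 : θ ≤ 1 := min_le_left _ _
  have h := key θ hθ0 hθ1
  have hLv_le : Lv ≤ 2*d*(1+θ) := h
  have h2 : 2*(d:ℝ)*θ ≤ 2*d*((Lv-2*d)/(2*d+1)) :=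
    mul_le_mul_of_nonneg_left (min_le_right _ _) (by positivity)
  have h3 : 2*(d:ℝ)*((Lv-2*d)/(2*d+1)) < Lv - 2*d := by
    rw [mul_comm, div_mul_eq_mul_div, div_lt_iff₀ hd1]
    nlinarith [hLd]
  nlinarith [hLv_le, h2, h3]
end

section
/- Let Ω_1,…,Ω_N be an equivolume partition of [0,1]^d, let X_1,…,X_N be a stratified sample associated with it, and let R ⊆ [0,1]^d be measurable. Let V be any real number with V ≥ #{i : 0 < λ(Ω_i ∩ R) < 1/N}. Then for every t ≥ 0, P( |∑_{n=1}^N 1_R(X_n) − N·λ(R)| ≥ t ) ≤ 2·exp( − t² / (2V + (2/3)t) ). -/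
open MeasureTheory ProbabilityTheory Real Set
open scoped ENNReal
open scoped Nat


lemma fact_ge (n : ℕ) : 2 * 3 ^ n ≤ (n + 2) ! := by
  induction n with
  | zero => simp [Nat.factorial]
  | succ k ih =>
      have : (k + 3) ! = (k + 3) * (k + 2) ! := rfl
      calc 2 * 3 ^ (k+1) = 3 * (2 * 3 ^ k) := by ring
        _ ≤ 3 * (k + 2) ! := by omega
        _ ≤ (k + 3) * (k + 2) ! := by
            have := Nat.factorial_pos (k+2); nlinarith
        _ = (k + 3) ! := rfl

lemma exp_peel (x : ℝ) : exp x = 1 + x + ∑' n : ℕ, x ^ (n + 2) / (n + 2) ! := by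
  have h0 : exp x = ∑' n : ℕ, x ^ n / n ! := by
    rw [Real.exp_eq_exp_ℝ, NormedSpace.exp_eq_tsum_div]
  have hs : Summable (fun n : ℕ => x ^ n / n !) := Real.summable_pow_div_factorial x
  have hs1 : Summable (fun n : ℕ => x ^ (n + 1) / (n + 1) !) := (summable_nat_add_iff 1).2 hs
  rw [h0, Summable.tsum_eq_zero_add hs, Summable.tsum_eq_zero_add hs1]
  simp [Nat.factorial]
  ring

lemma exp_le_quad {x : ℝ} (hx : x ≤ 0) : exp x ≤ 1 + x + x ^ 2 / 2 := by
  have h3 : 1 + (-x) + (-x) ^ 2 / 2 ≤ exp (-x) := by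
    have := Real.sum_le_exp_of_nonneg (by linarith : (0:ℝ) ≤ -x) 3
    simp [Finset.sum_range_succ, Nat.factorial] at this
    nlinarith [this]
  have hmul : exp x * exp (-x) = 1 := by rw [← Real.exp_add]; simp
  nlinarith [exp_pos x, exp_pos (-x), sq_nonneg (x ^ 2), sq_nonneg (x + 1), sq_nonneg x]

lemma ptwise {s y : ℝ} (hs0 : 0 ≤ s) (hs3 : s < 3) (hy1 : -1 ≤ y) (hy2 : y ≤ 1) :
    exp (s * y) ≤ 1 + s * y + y ^ 2 * (s ^ 2 / (2 * (1 - s / 3))) := by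
  have hden : 0 < 1 - s / 3 := by linarith
  rcases le_or_gt y 0 with hy | hy
  · have hx : s * y ≤ 0 := mul_nonpos_of_nonneg_of_nonpos hs0 hy
    have h1 := exp_le_quad hx
    have h2 : (s * y) ^ 2 / 2 ≤ y ^ 2 * (s ^ 2 / (2 * (1 - s / 3))) := by
      have hc : s ^ 2 / 2 ≤ s ^ 2 / (2 * (1 - s / 3)) :=
        div_le_div_of_nonneg_left (sq_nonneg s) (by linarith) (by linarith)
      have := mul_le_mul_of_nonneg_left hc (sq_nonneg y)
      rw [div_le_iff₀ (by norm_num : (0:ℝ) < 2)]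
      nlinarith [this]
    linarith
  · -- y > 0 branch via series
    have hgeo : Summable (fun n : ℕ => y ^ 2 * s ^ 2 / 2 * (s / 3) ^ n) :=
      (summable_geometric_of_lt_one (by positivity) (by linarith)).mul_left _
    have hser : Summable (fun n : ℕ => (s * y) ^ (n + 2) / (n + 2) !) :=
      (summable_nat_add_iff 2).2 (Real.summable_pow_div_factorial (s * y))
    have hterm : ∀ n : ℕ, (s * y) ^ (n + 2) / (n + 2) ! ≤ y ^ 2 * s ^ 2 / 2 * (s / 3) ^ n := by
      intro n
      have hfac : (2 * 3 ^ n : ℝ) ≤ (n + 2) ! := by exact_mod_cast fact_ge n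
      have hyp : y ^ (n + 2) ≤ y ^ 2 := pow_le_pow_of_le_one hy.le hy2 (by omega)
      have h1 : (s * y) ^ (n + 2) = s ^ (n + 2) * y ^ (n + 2) := mul_pow s y (n+2)
      have hsn : (0:ℝ) ≤ s ^ (n + 2) := by positivity
      have h2 : (s * y) ^ (n + 2) ≤ s ^ (n + 2) * y ^ 2 := by
        rw [h1]; exact mul_le_mul_of_nonneg_left hyp hsn
      have h3 : (s * y) ^ (n + 2) / (n + 2) ! ≤ s ^ (n + 2) * y ^ 2 / (2 * 3 ^ n) := by
        apply div_le_div₀ (by positivity) h2 (by positivity) hfac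
      refine h3.trans (le_of_eq ?_)
      rw [div_pow]
      field_simp
      ring
    have hsum : ∑' n : ℕ, (s * y) ^ (n + 2) / (n + 2) ! ≤
        ∑' n : ℕ, y ^ 2 * s ^ 2 / 2 * (s / 3) ^ n := Summable.tsum_le_tsum hterm hser hgeo
    have hg : ∑' n : ℕ, y ^ 2 * s ^ 2 / 2 * (s / 3) ^ n
        = y ^ 2 * (s ^ 2 / (2 * (1 - s / 3))) := by
      rw [tsum_mul_left, tsum_geometric_of_lt_one (by positivity) (by linarith)]
      field_simp
    rw [exp_peel (s * y)]
    rw [hg] at hsum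
    exact add_le_add le_rfl hsum

lemma bern_mgf_le {p s : ℝ} (hp0 : 0 ≤ p) (hp1 : p ≤ 1) (hs0 : 0 ≤ s) (hs3 : s < 3) :
    p * exp (s * (1 - p)) + (1 - p) * exp (-(s * p)) ≤
      exp (p * (1 - p) * (s ^ 2 / (2 * (1 - s / 3)))) := by
  set c := s ^ 2 / (2 * (1 - s / 3)) with hc
  have hcpos : 0 ≤ c := by
    have : 0 < 1 - s / 3 := by linarith
    positivity
  have h1 : exp (s * (1 - p)) ≤ 1 + s * (1 - p) + (1 - p) ^ 2 * c :=
    ptwise hs0 hs3 (by linarith) (by linarith)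
  have h2 : exp (-(s * p)) ≤ 1 + s * (-p) + (-p) ^ 2 * c := by
    have := ptwise hs0 hs3 (y := -p) (by linarith) (by linarith)
    rw [mul_neg] at this
    linarith [this]
  have h3 : 1 + p * (1 - p) * c ≤ exp (p * (1 - p) * c) := by
    have := Real.add_one_le_exp (p * (1 - p) * c)
    linarith
  have h4 : p * exp (s * (1 - p)) ≤ p * (1 + s * (1 - p) + (1 - p) ^ 2 * c) :=
    mul_le_mul_of_nonneg_left h1 hp0
  have h5 : (1 - p) * exp (-(s * p)) ≤ (1 - p) * (1 + s * (-p) + (-p) ^ 2 * c) :=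
    mul_le_mul_of_nonneg_left h2 (by linarith)
  nlinarith [h4, h5, h3]


section OneTail
variable {Ω : Type*} [MeasureSpace Ω] [IsProbabilityMeasure (ℙ : Measure Ω)] {N : ℕ}

-- exact mgf of a centered indicator
lemma mgf_indicator_sub (A : Set Ω) (hA : MeasurableSet A) (q s : ℝ)
    (hq : q = (ℙ A).toReal) :
    mgf (fun ω => A.indicator (fun _ => (1:ℝ)) ω - q) ℙ s
      = q * exp (s * (1 - q)) + (1 - q) * exp (-(s * q)) := by
  have hAc : (ℙ Aᶜ).toReal = 1 - q := by
    rw [prob_compl_eq_one_sub hA, hq,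
      ENNReal.toReal_sub_of_le prob_le_one ENNReal.one_ne_top, ENNReal.toReal_one]
  have hfun : (fun ω => exp (s * (A.indicator (fun _ => (1:ℝ)) ω - q)))
      = fun ω => A.indicator (fun _ => exp (s * (1 - q))) ω
          + Aᶜ.indicator (fun _ => exp (-(s * q))) ω := by
    funext ω
    by_cases h : ω ∈ A
    · simp [h, indicator_of_mem, indicator_of_notMem]
    · simp only [indicator_of_notMem h, indicator_of_mem (Set.mem_compl h)]
      ring_nf
  rw [mgf, hfun, integral_add ((integrable_const _).indicator hA)
      ((integrable_const _).indicator hA.compl),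
    integral_indicator_const _ hA, integral_indicator_const _ hA.compl, measureReal_def, measureReal_def, hAc, ← hq]
  simp only [smul_eq_mul]

lemma onetail (A : Fin N → Set Ω) (hA : ∀ i, MeasurableSet (A i))
    (hind : iIndepFun
      (fun i ω => (A i).indicator (fun _ => (1:ℝ)) ω) ℙ)
    (p : Fin N → ℝ) (hp : ∀ i, p i = (ℙ (A i)).toReal)
    (V t : ℝ) (ht : 0 ≤ t) (hV0 : 0 ≤ V)
    (hVsum : ∑ i, p i * (1 - p i) ≤ V)
    (hdeg : (∀ i, p i = 0 ∨ p i = 1) ∨ 1 ≤ V) :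
    ℙ {ω | t ≤ ∑ i, ((A i).indicator (fun _ => (1:ℝ)) ω - p i)}
      ≤ ENNReal.ofReal (exp (-(t ^ 2) / (2 * V + (2/3) * t))) := by
  classical
  set Y : Fin N → Ω → ℝ := fun i ω => (A i).indicator (fun _ => (1:ℝ)) ω - p i with hY
  have hp0 : ∀ i, 0 ≤ p i := fun i => (hp i) ▸ ENNReal.toReal_nonneg
  have hp1 : ∀ i, p i ≤ 1 := by
    intro i
    rw [hp i]
    exact ENNReal.toReal_le_of_le_ofReal one_pos.le (by simpa using prob_le_one)
  have hYmeas : ∀ i, Measurable (Y i) :=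
    fun i => ((measurable_const.indicator (hA i)).sub measurable_const)
  have hindY : iIndepFun Y ℙ := by
    have := hind.comp (g := fun i (x : ℝ) => x - p i)
      (fun i => measurable_id.sub measurable_const)
    exact this
  have hmgf : ∀ (i : Fin N) (s : ℝ), mgf (Y i) ℙ s
      = p i * exp (s * (1 - p i)) + (1 - p i) * exp (-(s * p i)) :=
    fun i s => mgf_indicator_sub (A i) (hA i) (p i) s (hp i)
  -- the summed variable
  set W : Ω → ℝ := ∑ i, Y i with hW
  have hWapp : ∀ ω, W ω = ∑ i, Y i ω := fun ω => by rw [hW]; simp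
  have hWmeas : Measurable W := by
    have h : W = fun ω => ∑ i, Y i ω := funext hWapp
    rw [h]; exact Finset.measurable_sum _ fun i _ => hYmeas i
  have hWbound : ∀ ω, W ω ≤ N := by
    intro ω
    rw [hWapp]
    calc ∑ i, Y i ω ≤ ∑ _i : Fin N, (1:ℝ) := by
          apply Finset.sum_le_sum
          intro i _
          have h1 : (A i).indicator (fun _ => (1:ℝ)) ω ≤ 1 := by
            by_cases h : ω ∈ A i <;> simp [h]
          have := hp0 i; simp only [hY]; linarith
      _ = N := by simp
  have hint : ∀ s : ℝ, 0 ≤ s → Integrable (fun ω => exp (s * W ω)) ℙ := by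
    intro s hs
    refine Integrable.mono' (integrable_const (exp (s * N)))
      ((hWmeas.const_mul s).exp.aestronglyMeasurable) ?_
    filter_upwards with ω
    rw [Real.norm_of_nonneg (exp_pos _).le, exp_le_exp]
    exact mul_le_mul_of_nonneg_left (hWbound ω) hs
  have hmgfW : ∀ s : ℝ, mgf W ℙ s = ∏ i, mgf (Y i) ℙ s :=
    fun s => hindY.mgf_sum hYmeas Finset.univ
  -- Chernoff with arbitrary parameter, given a bound on the product of mgfs
  have chern : ∀ s B : ℝ, 0 ≤ s → (∏ i, mgf (Y i) ℙ s) ≤ exp B →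
      ℙ {ω | t ≤ W ω} ≤ ENNReal.ofReal (exp (-(s * t) + B)) := by
    intro s B hs hprod
    have h1 := measure_ge_le_exp_mul_mgf (μ := ℙ) (X := W) t hs (hint s hs)
    rw [hmgfW s] at h1
    have h2 : (ℙ {ω | t ≤ W ω}).toReal ≤ exp (-(s * t) + B) := by
      calc (ℙ {ω | t ≤ W ω}).toReal ≤ exp (-s * t) * ∏ i, mgf (Y i) ℙ s := h1
        _ ≤ exp (-s * t) * exp B := by
            apply mul_le_mul_of_nonneg_left hprod (exp_pos _).le
        _ = exp (-(s * t) + B) := by rw [← exp_add]; ring_nf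
    rw [← ENNReal.ofReal_toReal (measure_ne_top ℙ _)]
    exact ENNReal.ofReal_le_ofReal h2
  have hsetEq : {ω | t ≤ ∑ i, ((A i).indicator (fun _ => (1:ℝ)) ω - p i)}
      = {ω | t ≤ W ω} := by
    ext ω; simp only [Set.mem_setOf_eq, hWapp]; exact Iff.rfl
  rw [hsetEq]
  rcases hdeg with hd | hVge1
  · -- degenerate case: all mgfs equal 1; use s = 3
    have hprod : (∏ i, mgf (Y i) ℙ 3) ≤ exp 0 := by
      have : ∀ i, mgf (Y i) ℙ 3 = 1 := by
        intro i
        rw [hmgf i 3]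
        rcases hd i with h | h <;> rw [h] <;> norm_num
      rw [Finset.prod_congr rfl (fun i _ => this i)]
      simp
    refine (chern 3 0 (by norm_num) hprod).trans (ENNReal.ofReal_le_ofReal ?_)
    rw [exp_le_exp]
    rcases eq_or_lt_of_le ht with h | hpos
    · rw [← h]; norm_num
    · have hD : 0 < 2 * V + (2/3) * t := by linarith
      rw [add_zero, neg_le, neg_div, neg_neg, div_le_iff₀ hD]
      nlinarith
  · -- main case: V ≥ 1
    set s := t / (V + t / 3) with hs
    have hDpos : 0 < V + t / 3 := by linarith
    have hs0 : 0 ≤ s := div_nonneg ht hDpos.le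
    have hs3 : s < 3 := by
      rw [hs, div_lt_iff₀ hDpos]
      linarith
    set c := s ^ 2 / (2 * (1 - s / 3)) with hc
    have hcpos : 0 ≤ c := by
      have : 0 < 1 - s / 3 := by linarith
      positivity
    have hprod : (∏ i, mgf (Y i) ℙ s) ≤ exp (V * c) := by
      calc ∏ i, mgf (Y i) ℙ s ≤ ∏ i, exp (p i * (1 - p i) * c) := by
            apply Finset.prod_le_prod
            · intro i _
              rw [hmgf i s]
              have := exp_pos (s * (1 - p i)); have := exp_pos (-(s * p i))
              have := hp0 i; have := hp1 i
              nlinarith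
            · intro i _
              rw [hmgf i s]
              exact bern_mgf_le (hp0 i) (hp1 i) hs0 hs3
        _ = exp (∑ i, p i * (1 - p i) * c) := by rw [Real.exp_sum]
        _ ≤ exp (V * c) := by
            rw [exp_le_exp, ← Finset.sum_mul]
            exact mul_le_mul_of_nonneg_right hVsum hcpos
    refine (chern s (V * c) hs0 hprod).trans (ENNReal.ofReal_le_ofReal ?_)
    rw [exp_le_exp]
    -- algebra: -(s*t) + V*c = -(t^2)/(2V + (2/3) t)
    have hVpos : (0:ℝ) < V := by linarith
    have h1 : 1 - s / 3 = V / (V + t / 3) := by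
      rw [hs]; field_simp; ring
    have hceq : c = t ^ 2 / (2 * V * (V + t / 3)) := by
      rw [hc, h1, hs]
      field_simp
    rw [hceq, hs]
    have hne1 : V ≠ 0 := hVpos.ne'
    have hne2 : V + t / 3 ≠ 0 := hDpos.ne'
    have hne3 : 2 * V + 2/3 * t ≠ 0 := by positivity
    apply le_of_eq
    field_simp
    ring
end OneTail


def IsStratifiedSample {d N : ℕ} {Ω : Type*} [MeasureSpace Ω]
    (Os : Fin N → Set (Fin d → ℝ)) (X : Fin N → Ω → (Fin d → ℝ)) : Prop :=
  (∀ i, Measurable (X i)) ∧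
  iIndepFun X ℙ ∧
  ∀ i, ∀ A : Set (Fin d → ℝ), MeasurableSet A →
    ℙ (X i ⁻¹' A) = N * volume (A ∩ Os i)

theorem bernstein_tail_bound_stratified {d N : ℕ}
    (Os : Fin N → Set (Fin d → ℝ)) (hpart : IsEquivolumePartition Os)
    {Ω : Type*} [MeasureSpace Ω] [IsProbabilityMeasure (ℙ : Measure Ω)]
    (X : Fin N → Ω → (Fin d → ℝ)) (hX : IsStratifiedSample Os X)
    (R : Set (Fin d → ℝ)) (hRsub : R ⊆ Set.Icc 0 1) (hRm : MeasurableSet R)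
    (V : ℝ)
    (hV : (Nat.card {i : Fin N // 0 < volume (Os i ∩ R) ∧
        volume (Os i ∩ R) < (N : ℝ≥0∞)⁻¹} : ℝ) ≤ V)
    (t : ℝ) (ht : 0 ≤ t) :
    ℙ {ω | t ≤ |(∑ n, R.indicator (fun _ => (1:ℝ)) (X n ω)) - (N : ℝ) * (volume R).toReal|}
      ≤ ENNReal.ofReal (2 * Real.exp (-(t ^ 2) / (2 * V + (2/3) * t))) := by
  classical
  obtain ⟨hXmeas, hXind, hXlaw⟩ := hX
  obtain ⟨hOm, hOdisj, hOun, hOvol⟩ := hpart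
  set P : Fin N → Prop := fun i => 0 < volume (Os i ∩ R) ∧ volume (Os i ∩ R) < (N : ℝ≥0∞)⁻¹
    with hP
  set A : Fin N → Set Ω := fun i => X i ⁻¹' R with hAdef
  have hAm : ∀ i, MeasurableSet (A i) := fun i => (hXmeas i) hRm
  set p : Fin N → ℝ := fun i => (ℙ (A i)).toReal with hpdef
  have hp0 : ∀ i, 0 ≤ p i := fun i => ENNReal.toReal_nonneg
  have hp1 : ∀ i, p i ≤ 1 := fun i =>
    ENNReal.toReal_le_of_le_ofReal one_pos.le (by simpa using prob_le_one)
  have hkey : ∀ i, ℙ (A i) = N * volume (Os i ∩ R) := by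
    intro i
    rw [hAdef]
    simp only
    rw [hXlaw i R hRm, Set.inter_comm]
  -- sum of p equals N * vol R
  have hm : ∑ i, p i = (N : ℝ) * (volume R).toReal := by
    have h1 : ∑ i, ℙ (A i) = (N : ℝ≥0∞) * volume R := by
      calc ∑ i, ℙ (A i) = ∑ i, (N : ℝ≥0∞) * volume (Os i ∩ R) :=
            Finset.sum_congr rfl fun i _ => hkey i
        _ = (N : ℝ≥0∞) * ∑ i, volume (Os i ∩ R) := by rw [Finset.mul_sum]
        _ = (N : ℝ≥0∞) * volume (⋃ i, Os i ∩ R) := by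
            rw [measure_iUnion ?_ (fun i => (hOm i).inter hRm), tsum_fintype]
            intro i j hij
            exact (hOdisj hij).mono inter_subset_left inter_subset_left
        _ = (N : ℝ≥0∞) * volume R := by
            rw [← Set.iUnion_inter, hOun, Set.inter_comm,
              Set.inter_eq_self_of_subset_left hRsub]
    calc ∑ i, p i = (∑ i, ℙ (A i)).toReal := by
          rw [ENNReal.toReal_sum (fun i _ => measure_ne_top ℙ _)]
      _ = (N : ℝ) * (volume R).toReal := by
          rw [h1, ENNReal.toReal_mul]
          simp
  -- dichotomy
  have hdich : ∀ i, (p i = 0 ∨ p i = 1) ∨ P i := by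
    intro i
    have hNpos : 0 < N := i.pos
    have hNne : (N : ℝ≥0∞) ≠ 0 := by exact_mod_cast Nat.cast_ne_zero.2 hNpos.ne'
    have hle : volume (Os i ∩ R) ≤ (N : ℝ≥0∞)⁻¹ := by
      rw [← hOvol i]; exact measure_mono inter_subset_left
    by_cases h0 : volume (Os i ∩ R) = 0
    · left; left
      rw [hpdef]; simp only
      rw [hkey i, h0, mul_zero]; simp
    by_cases h1 : volume (Os i ∩ R) = (N : ℝ≥0∞)⁻¹
    · left; right
      rw [hpdef]; simp only
      rw [hkey i, h1, ENNReal.mul_inv_cancel hNne (ENNReal.natCast_ne_top N)]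
      simp
    · right
      exact ⟨pos_iff_ne_zero.mpr h0, lt_of_le_of_ne hle h1⟩
  have hV0 : 0 ≤ V := le_trans (Nat.cast_nonneg _) hV
  -- variance sum bound
  have hcard : ((Finset.univ.filter P).card : ℝ) ≤ V := by
    have : Nat.card {i : Fin N // P i} = (Finset.univ.filter P).card := by
      rw [Nat.card_eq_fintype_card, Fintype.card_subtype]
    rw [← this]
    exact hV
  have hVsum : ∑ i, p i * (1 - p i) ≤ V := by
    calc ∑ i, p i * (1 - p i) ≤ ∑ i, (if P i then (1:ℝ) else 0) := by
          apply Finset.sum_le_sum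
          intro i _
          by_cases h : P i
          · rw [if_pos h]; nlinarith [hp0 i, hp1 i]
          · rw [if_neg h]
            rcases (hdich i).resolve_right h with h' | h' <;> rw [h'] <;> ring_nf <;> norm_num
      _ = ((Finset.univ.filter P).card : ℝ) := by rw [Finset.sum_boole]
      _ ≤ V := hcard
  -- degeneracy
  have hdeg : (∀ i, p i = 0 ∨ p i = 1) ∨ 1 ≤ V := by
    by_cases hall : ∀ i, p i = 0 ∨ p i = 1
    · exact Or.inl hall
    · right
      push_neg at hall
      obtain ⟨i, hi0, hi1⟩ := hall
      have hPi : P i := (hdich i).resolve_left (by tauto)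
      have : Nonempty {i : Fin N // P i} := ⟨⟨i, hPi⟩⟩
      have h1 : 1 ≤ Nat.card {i : Fin N // P i} := Nat.one_le_iff_ne_zero.2 Nat.card_pos.ne'
      calc (1:ℝ) ≤ (Nat.card {i : Fin N // P i} : ℝ) := by exact_mod_cast h1
        _ ≤ V := hV
  -- independence of the indicator families
  have hindA : iIndepFun
      (fun i ω => (A i).indicator (fun _ => (1:ℝ)) ω) ℙ := by
    have h := hXind.comp (g := fun _ => R.indicator (fun _ => (1:ℝ)))
      (fun i => measurable_const.indicator hRm)
    have he : (fun i => R.indicator (fun _ => (1:ℝ)) ∘ X i)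
        = fun i ω => (A i).indicator (fun _ => (1:ℝ)) ω := by
      funext i ω
      by_cases h : X i ω ∈ R <;>
        simp [Function.comp, h, hAdef, Set.indicator_of_mem, Set.indicator_of_notMem,
          Set.mem_preimage]
    rwa [he] at h
  have hindAc : iIndepFun
      (fun i ω => (A i)ᶜ.indicator (fun _ => (1:ℝ)) ω) ℙ := by
    have h := hXind.comp (g := fun _ => Rᶜ.indicator (fun _ => (1:ℝ)))
      (fun i => measurable_const.indicator hRm.compl)
    have he : (fun i => Rᶜ.indicator (fun _ => (1:ℝ)) ∘ X i)
        = fun i ω => (A i)ᶜ.indicator (fun _ => (1:ℝ)) ω := by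
      funext i ω
      by_cases h : X i ω ∈ R <;>
        simp [Function.comp, h, hAdef, Set.indicator_of_mem, Set.indicator_of_notMem,
          Set.mem_preimage]
    rwa [he] at h
  have hpc : ∀ i, (1 - p i) = (ℙ (A i)ᶜ).toReal := by
    intro i
    rw [prob_compl_eq_one_sub (hAm i),
      ENNReal.toReal_sub_of_le prob_le_one ENNReal.one_ne_top, ENNReal.toReal_one, hpdef]
  -- the two one-sided bounds
  have hup := onetail A hAm hindA p (fun i => rfl) V t ht hV0 hVsum hdeg
  have hdn := onetail (fun i => (A i)ᶜ) (fun i => (hAm i).compl) hindAc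
      (fun i => 1 - p i) hpc V t ht hV0
      (by calc ∑ i, (1 - p i) * (1 - (1 - p i)) = ∑ i, p i * (1 - p i) :=
              Finset.sum_congr rfl fun i _ => by ring
            _ ≤ V := hVsum)
      (by rcases hdeg with h | h
          · exact Or.inl fun i => by rcases h i with h' | h' <;> simp [h']
          · exact Or.inr h)
  -- event decomposition
  have hII : ∀ (n : Fin N) ω, R.indicator (fun _ => (1:ℝ)) (X n ω)
      = (A n).indicator (fun _ => (1:ℝ)) ω := by
    intro n ω
    by_cases h : X n ω ∈ R <;>
      simp [h, hAdef, Set.indicator_of_mem, Set.indicator_of_notMem, Set.mem_preimage]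
  have hcompl : ∀ (n : Fin N) ω, (A n)ᶜ.indicator (fun _ => (1:ℝ)) ω
      = 1 - (A n).indicator (fun _ => (1:ℝ)) ω := by
    intro n ω
    by_cases h : ω ∈ A n <;> simp [h]
  have hsub : {ω | t ≤ |(∑ n, R.indicator (fun _ => (1:ℝ)) (X n ω)) -
        (N : ℝ) * (volume R).toReal|}
      ⊆ {ω | t ≤ ∑ i, ((A i).indicator (fun _ => (1:ℝ)) ω - p i)}
        ∪ {ω | t ≤ ∑ i, ((A i)ᶜ.indicator (fun _ => (1:ℝ)) ω - (1 - p i))} := by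
    intro ω hω
    simp only [Set.mem_setOf_eq] at hω
    have e1 : ∑ i, ((A i).indicator (fun _ => (1:ℝ)) ω - p i)
        = (∑ n, R.indicator (fun _ => (1:ℝ)) (X n ω)) - (N : ℝ) * (volume R).toReal := by
      rw [Finset.sum_sub_distrib, hm]
      simp only [hII]
    have e2 : ∑ i, ((A i)ᶜ.indicator (fun _ => (1:ℝ)) ω - (1 - p i))
        = -((∑ n, R.indicator (fun _ => (1:ℝ)) (X n ω)) - (N : ℝ) * (volume R).toReal) := by
      have : ∀ i : Fin N, (A i)ᶜ.indicator (fun _ => (1:ℝ)) ω - (1 - p i)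
          = -((A i).indicator (fun _ => (1:ℝ)) ω - p i) := by
        intro i; rw [hcompl i ω]; ring
      rw [Finset.sum_congr rfl fun i _ => this i, Finset.sum_neg_distrib, e1]
    rcases le_abs.mp hω with h | h
    · left; simp only [Set.mem_setOf_eq, e1]; exact h
    · right; simp only [Set.mem_setOf_eq, e2]; exact h
  calc ℙ {ω | t ≤ |(∑ n, R.indicator (fun _ => (1:ℝ)) (X n ω)) -
          (N : ℝ) * (volume R).toReal|}
      ≤ ℙ ({ω | t ≤ ∑ i, ((A i).indicator (fun _ => (1:ℝ)) ω - p i)}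
          ∪ {ω | t ≤ ∑ i, ((A i)ᶜ.indicator (fun _ => (1:ℝ)) ω - (1 - p i))}) :=
        measure_mono hsub
    _ ≤ ℙ {ω | t ≤ ∑ i, ((A i).indicator (fun _ => (1:ℝ)) ω - p i)}
        + ℙ {ω | t ≤ ∑ i, ((A i)ᶜ.indicator (fun _ => (1:ℝ)) ω - (1 - p i))} :=
        measure_union_le _ _
    _ ≤ ENNReal.ofReal (exp (-(t ^ 2) / (2 * V + (2/3) * t)))
        + ENNReal.ofReal (exp (-(t ^ 2) / (2 * V + (2/3) * t))) := add_le_add hup hdn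
    _ = ENNReal.ofReal (2 * Real.exp (-(t ^ 2) / (2 * V + (2/3) * t))) := by
        rw [← ENNReal.ofReal_add (exp_nonneg _) (exp_nonneg _)]
        ring_nf
end
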